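/- arXiv:2509.20316 — 5 statements merged into one kernel-verified Lean document; each statement's English description precedes it below -/
import Mathlib

section
/- The Schur polynomials A_m satisfy A₀ = 1, A₁ = 1, and the second-order recurrence A_m = A_{m−1} + q^{m−1} A_{m−2} for all m ≥ 2, as an identity of polynomials in ℤ[q]. -/
noncomputable section

open PowerSeries

/-- `(q;q)_n = ∏_{j=1}^n (1 - q^j)` in `ℤ⟦q⟦` (it is a polynomial). -/
def qqPoch (n : ℕ) : PowerSeries ℤ :=
  ∏ j ∈ Finset.range n, (1 - (PowerSeries.X : PowerSeries ℤ) ^ (j + 1))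

/-- The Gaussian binomial coefficient `[r choose n]_q = (q;q)_r/((q;q)_n (q;q)_{r-n})`
for `0 ≤ n ≤ r`, and `0` otherwise.  The denominator has constant term `1`, so it is
inverted via `PowerSeries.invOfUnit`; the quotient is in fact a polynomial. -/
def qBinom (r n : ℕ) : PowerSeries ℤ :=
  if n ≤ r then qqPoch r * PowerSeries.invOfUnit (qqPoch n * qqPoch (r - n)) 1 else 0

/-- The Schur polynomial `A_m(q) = Σ_{n≥0} q^{n²} [m−n choose n]_q`
(the terms with `2n > m` vanish). -/
def schurA (m : ℕ) : PowerSeries ℤ :=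
  ∑ n ∈ Finset.range (m + 1), (PowerSeries.X : PowerSeries ℤ) ^ (n ^ 2) * qBinom (m - n) n

lemma constCoeff_qqPoch (n : ℕ) : constantCoeff (qqPoch n) = 1 := by
  unfold qqPoch; rw [map_prod]; simp

lemma qqPoch_mul_inv (a b : ℕ) :
    (qqPoch a * qqPoch b) * PowerSeries.invOfUnit (qqPoch a * qqPoch b) 1 = 1 := by
  apply PowerSeries.mul_invOfUnit
  simp [map_mul, constCoeff_qqPoch]

lemma qqPoch_zero : qqPoch 0 = 1 := by simp [qqPoch]

lemma qqPoch_succ (k : ℕ) :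
    qqPoch (k + 1) = qqPoch k * (1 - (PowerSeries.X : PowerSeries ℤ) ^ (k + 1)) := by
  simp [qqPoch, Finset.prod_range_succ]

lemma qBinom_eq_of {r n : ℕ} (h : n ≤ r) (f : PowerSeries ℤ)
    (hf : (qqPoch n * qqPoch (r - n)) * f = qqPoch r) : qBinom r n = f := by
  have h1 := qqPoch_mul_inv n (r - n)
  rw [qBinom, if_pos h, ← hf, mul_comm (qqPoch n * qqPoch (r - n)) f, mul_assoc, h1, mul_one]

lemma qBinom_zero_right (r : ℕ) : qBinom r 0 = 1 := by
  apply qBinom_eq_of (Nat.zero_le r); simp [qqPoch_zero]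

lemma qBinom_self (r : ℕ) : qBinom r r = 1 := by
  apply qBinom_eq_of le_rfl; simp [qqPoch_zero]

lemma qBinom_eq_zero {r n : ℕ} (h : r < n) : qBinom r n = 0 := by
  rw [qBinom, if_neg (by omega)]

lemma pascal {r n : ℕ} (hn : 1 ≤ n) (hr : 1 ≤ r) :
    qBinom r n = qBinom (r - 1) n +
      (PowerSeries.X : PowerSeries ℤ) ^ (r - n) * qBinom (r - 1) (n - 1) := by
  rcases lt_trichotomy n r with hlt | heq | hgt
  · apply qBinom_eq_of hlt.le
    set I1 := PowerSeries.invOfUnit (qqPoch n * qqPoch (r - 1 - n)) 1 with hI1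
    set I2 := PowerSeries.invOfUnit (qqPoch (n - 1) * qqPoch (r - n)) 1 with hI2
    have hb1 : qBinom (r - 1) n = qqPoch (r - 1) * I1 := by
      rw [qBinom, if_pos (by omega)]
    have hb2 : qBinom (r - 1) (n - 1) = qqPoch (r - 1) * I2 := by
      rw [qBinom, if_pos (by omega), hI2, show r - 1 - (n - 1) = r - n from by omega]
    have e1 : qqPoch (r - n) = qqPoch (r - 1 - n) *
        (1 - (PowerSeries.X : PowerSeries ℤ) ^ (r - n)) := by
      have h' : r - n = (r - 1 - n) + 1 := by omega
      rw [h', qqPoch_succ]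
    have e2 : qqPoch n = qqPoch (n - 1) * (1 - (PowerSeries.X : PowerSeries ℤ) ^ n) := by
      have h' : n = (n - 1) + 1 := by omega
      conv_lhs => rw [h', qqPoch_succ]
      rw [← h']
    have er : qqPoch r = qqPoch (r - 1) * (1 - (PowerSeries.X : PowerSeries ℤ) ^ r) := by
      have h' : r = (r - 1) + 1 := by omega
      conv_lhs => rw [h', qqPoch_succ]
      rw [← h']
    have i1 : (qqPoch n * qqPoch (r - 1 - n)) * I1 = 1 := qqPoch_mul_inv _ _
    have i2 : (qqPoch (n - 1) * qqPoch (r - n)) * I2 = 1 := qqPoch_mul_inv _ _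
    have hxr : (PowerSeries.X : PowerSeries ℤ) ^ (r - n) * (PowerSeries.X : PowerSeries ℤ) ^ n
        = (PowerSeries.X : PowerSeries ℤ) ^ r := by
      rw [← pow_add]; congr 1; omega
    rw [hb1, hb2]
    linear_combination (qqPoch (r - 1) * I1 * qqPoch n) * e1 +
      ((PowerSeries.X : PowerSeries ℤ) ^ (r - n) * qqPoch (r - 1) * qqPoch (r - n) * I2) * e2 -
      er + ((1 - (PowerSeries.X : PowerSeries ℤ) ^ (r - n)) * qqPoch (r - 1)) * i1 +
      ((PowerSeries.X : PowerSeries ℤ) ^ (r - n) *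
        (1 - (PowerSeries.X : PowerSeries ℤ) ^ n) * qqPoch (r - 1)) * i2 -
      qqPoch (r - 1) * hxr
  · subst heq
    rw [qBinom_self, qBinom_eq_zero (by omega), Nat.sub_self, pow_zero, one_mul,
      qBinom_self]
    ring
  · rw [qBinom_eq_zero hgt, qBinom_eq_zero (by omega), qBinom_eq_zero (by omega)]
    ring

/-- Schur's recurrence: `A₀ = 1`, `A₁ = 1`, and `A_m = A_{m−1} + q^{m−1} A_{m−2}`
for all `m ≥ 2`. -/
theorem schurA_recurrence :
    schurA 0 = 1 ∧ schurA 1 = 1 ∧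
    ∀ m : ℕ, 2 ≤ m →
      schurA m = schurA (m - 1) +
        (PowerSeries.X : PowerSeries ℤ) ^ (m - 1) * schurA (m - 2) := by
  refine ⟨?_, ?_, ?_⟩
  · simp [schurA, qBinom_zero_right]
  · rw [schurA]
    rw [Finset.sum_range_succ, Finset.sum_range_one]
    rw [qBinom_zero_right, qBinom_eq_zero (show 1 - 1 < 1 from by norm_num)]
    ring
  · rintro m hm
    obtain ⟨k, rfl⟩ : ∃ k, m = k + 2 := ⟨m - 2, by omega⟩
    simp only [Nat.add_sub_cancel, show k + 2 - 1 = k + 1 from rfl]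
    rw [schurA, schurA, schurA]
    conv_lhs => rw [Finset.sum_range_succ' _ (k + 2)]
    conv_lhs => rw [Finset.sum_range_succ _ (k + 1)]
    conv_rhs => rw [Finset.sum_range_succ' _ (k + 1)]
    rw [show k + 2 - (k + 1 + 1) = 0 from by omega,
      qBinom_eq_zero (show (0:ℕ) < k + 1 + 1 from by omega), mul_zero, add_zero]
    have key : ∀ n ∈ Finset.range (k + 1),
        (PowerSeries.X : PowerSeries ℤ) ^ ((n + 1) ^ 2) * qBinom (k + 2 - (n + 1)) (n + 1)
        = (PowerSeries.X : PowerSeries ℤ) ^ ((n + 1) ^ 2) * qBinom (k + 1 - (n + 1)) (n + 1)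
          + (PowerSeries.X : PowerSeries ℤ) ^ (k + 1) *
            ((PowerSeries.X : PowerSeries ℤ) ^ (n ^ 2) * qBinom (k - n) n) := by
      intro n hn
      rw [Finset.mem_range] at hn
      rw [show k + 2 - (n + 1) = k + 1 - n from by omega,
        pascal (by omega) (show 1 ≤ k + 1 - n from by omega),
        show k + 1 - n - 1 = k - n from by omega, show n + 1 - 1 = n from rfl,
        show k + 1 - (n + 1) = k - n from by omega, mul_add]
      congr 1
      by_cases h2 : 2 * n ≤ k
      · rw [← mul_assoc, ← mul_assoc, ← pow_add, ← pow_add]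
        congr 2
        have hs : (n + 1) ^ 2 = n ^ 2 + 2 * n + 1 := by ring
        omega
      · rw [qBinom_eq_zero (show k - n < n from by omega)]; simp
    rw [Finset.sum_congr rfl key, Finset.sum_add_distrib, ← Finset.mul_sum]
    rw [qBinom_zero_right, qBinom_zero_right]
    ring
end
end

section
/- For every m ≥ 0, the Schur polynomial A_m agrees with the finite product P_m through degree m−1: in the formal power series ring ℤ⟦q⟧ one has A_m(q) − P_m(q) ∈ q^m·ℤ⟦q⟧. -/
noncomputable section

open PowerSeries

/-- `P_m(q) = ∏_{j=1}^m 1/((1 − q^{5j−4})(1 − q^{5j−1})) ∈ ℤ⟦q⟧` (with the product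
reindexed by `j ↦ j+1`, i.e. exponents `5j+1` and `5j+4` for `0 ≤ j < m`); each factor
has constant term `1` and is inverted via `PowerSeries.invOfUnit`. -/
def Pprod (m : ℕ) : PowerSeries ℤ :=
  ∏ j ∈ Finset.range m,
    PowerSeries.invOfUnit
      ((1 - (PowerSeries.X : PowerSeries ℤ) ^ (5 * j + 1)) *
        (1 - (PowerSeries.X : PowerSeries ℤ) ^ (5 * j + 4))) 1

namespace RR
open Finset

abbrev R : Type := PowerSeries ℤ

lemma Xpow_mul (b s t u : ℕ) (h : s + t = u) : (X : R) ^ (b * s) * X ^ (b * t) = X ^ (b * u) := by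
  rw [← pow_add, ← Nat.mul_add, h]

/-- base-`b` q-Pochhammer `∏_{j=1}^n (1 - X^{b j})`. -/
def poch (b n : ℕ) : R := ∏ j ∈ Finset.range n, (1 - (X : R) ^ (b * (j + 1)))

/-- base-`b` Gaussian binomial as a power series (it is in fact a polynomial). -/
def gb (b : ℕ) : ℕ → ℕ → R
  | 0, 0 => 1
  | 0, _ + 1 => 0
  | _ + 1, 0 => 1
  | r + 1, n + 1 => gb b r (n + 1) + (X : R) ^ (b * (r - n)) * gb b r n

@[simp] lemma gb_zero_right (b r : ℕ) : gb b r 0 = 1 := by cases r <;> rfl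

lemma pascal1 (b r n : ℕ) :
    gb b (r + 1) (n + 1) = gb b r (n + 1) + (X : R) ^ (b * (r - n)) * gb b r n := rfl

lemma gb_eq_zero (b : ℕ) {r n : ℕ} (h : r < n) : gb b r n = 0 := by
  induction r generalizing n with
  | zero => obtain ⟨k, rfl⟩ := Nat.exists_eq_add_of_lt h; rfl
  | succ r ih =>
      obtain ⟨n, rfl⟩ : ∃ k, n = k + 1 := ⟨n - 1, by omega⟩
      rw [pascal1, ih (by omega), ih (by omega), mul_zero, add_zero]

@[simp] lemma gb_self (b r : ℕ) : gb b r r = 1 := by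
  induction r with
  | zero => rfl
  | succ r ih => rw [pascal1, gb_eq_zero b (by omega), ih, zero_add, Nat.sub_self, mul_zero,
      pow_zero, one_mul]

/-- absorption identity. -/
lemma gb_absorb (b : ℕ) : ∀ {r n : ℕ}, n ≤ r →
    gb b r (n + 1) * (1 - (X : R) ^ (b * (n + 1))) = gb b r n * (1 - (X : R) ^ (b * (r - n))) := by
  intro r
  induction r with
  | zero =>
      intro n h
      interval_cases n
      simp [gb_eq_zero b (by omega : (0:ℕ) < 1)]
  | succ r ih =>
      intro n h
      rcases Nat.lt_or_ge n (r + 1) with hn | hn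
      · have hn' : n ≤ r := by omega
        have hd1 := pascal1 b r n
        have IH1 := ih hn'
        have e1 := Xpow_mul b (r - n) (n + 1) (r + 1) (by omega)
        rcases Nat.eq_zero_or_pos n with rfl | hpos
        · have e0 : r + 1 - 0 = r + 1 := by omega
          rw [e0]
          simp only [gb_zero_right, Nat.sub_zero] at *
          linear_combination (1 - (X:R) ^ (b * (0 + 1))) * hd1 + IH1 - e1
        · obtain ⟨n, rfl⟩ : ∃ k, n = k + 1 := ⟨n - 1, by omega⟩
          have e0 : r + 1 - (n + 1) = r - n := by omega
          rw [e0]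
          have hd2 := pascal1 b r n
          have IH2 := ih (show n ≤ r by omega)
          have e2 := Xpow_mul b (r - n) (n + 1) (r + 1) (by omega)
          linear_combination (1 - (X:R) ^ (b * (n + 1 + 1))) * hd1 + IH1 +
            (X:R) ^ (b * (r - n)) * IH2 - gb b r (n+1) * e1 + gb b r (n+1) * e2 -
            (1 - (X:R) ^ (b * (r - n))) * hd2
      · have : n = r + 1 := by omega
        subst this
        rw [gb_eq_zero b (by omega), Nat.sub_self, mul_zero, pow_zero, zero_mul, sub_self,
          mul_zero]

lemma pascal2 (b r n : ℕ) :
    gb b (r + 1) (n + 1) = (X : R) ^ (b * (n + 1)) * gb b r (n + 1) + gb b r n := by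
  rcases Nat.lt_or_ge r n with hn | hn
  · rcases Nat.lt_or_ge r (n + 1) with h2 | h2
    · rw [gb_eq_zero b (by omega), gb_eq_zero b (by omega), gb_eq_zero b (by omega)]
      ring
    · omega
  · have hd1 := pascal1 b r n
    have habs := gb_absorb b hn
    linear_combination hd1 + habs

lemma gb_mul_poch (b : ℕ) : ∀ {r n : ℕ}, n ≤ r →
    gb b r n * (poch b n * poch b (r - n)) = poch b r := by
  intro r
  induction r with
  | zero => intro n h; interval_cases n; simp [poch]
  | succ r ih =>
      intro n h
      rcases Nat.eq_zero_or_pos n with rfl | hpos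
      · simp [poch]
      · obtain ⟨n, rfl⟩ : ∃ k, n = k + 1 := ⟨n - 1, by omega⟩
        rcases Nat.lt_or_ge n r with hn | hn
        · -- n + 1 ≤ r
          have e0 : r + 1 - (n + 1) = r - n := by omega
          rw [e0]
          have hd1 := pascal1 b r n
          have IH1 := ih (show n + 1 ≤ r by omega)
          have IH2 := ih (show n ≤ r by omega)
          -- poch expansions
          have hp1 : poch b (r - n) = poch b (r - (n + 1)) * (1 - (X:R) ^ (b * (r - n))) := by
            have : r - n = (r - (n + 1)) + 1 := by omega
            rw [this, poch, Finset.prod_range_succ, ← poch]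
          have hp2 : poch b (n + 1) = poch b n * (1 - (X:R) ^ (b * (n + 1))) := by
            rw [poch, Finset.prod_range_succ, ← poch]
          have hp3 : poch b (r + 1) = poch b r * (1 - (X:R) ^ (b * (r + 1))) := by
            rw [poch, Finset.prod_range_succ, ← poch]
          have e1 := Xpow_mul b (r - n) (n + 1) (r + 1) (by omega)
          calc gb b (r + 1) (n + 1) * (poch b (n + 1) * poch b (r - n))
              = (gb b r (n + 1) * (poch b (n + 1) * poch b (r - (n + 1)))) *
                  (1 - (X:R) ^ (b * (r - n))) +
                (X:R) ^ (b * (r - n)) * (1 - (X:R) ^ (b * (n + 1))) *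
                  (gb b r n * (poch b n * poch b (r - n))) := by
                rw [hd1, hp1, hp2]; ring
            _ = poch b r * (1 - (X:R) ^ (b * (r - n))) +
                (X:R) ^ (b * (r - n)) * (1 - (X:R) ^ (b * (n + 1))) * poch b r := by
                rw [IH1, IH2]
            _ = poch b (r + 1) := by rw [hp3]; linear_combination (-poch b r) * e1
        · -- n + 1 = r + 1 or n = r
          rcases Nat.lt_or_ge r (n + 1) with h2 | h2
          · have : n = r := by omega
            subst this
            simp [poch]
          · omega

lemma constantCoeff_poch (b n : ℕ) (hb : 0 < b) : constantCoeff (poch b n) = 1 := by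
  rw [poch, map_prod]
  apply Finset.prod_eq_one
  intro j _
  rw [map_sub, map_one, map_pow, constantCoeff_X, zero_pow (by positivity), sub_zero]


lemma qqPoch_eq (n : ℕ) : qqPoch n = poch 1 n := by simp [qqPoch, poch]

lemma qBinom_eq_gb (r n : ℕ) : qBinom r n = gb 1 r n := by
  rw [qBinom]
  split_ifs with h
  · have key := gb_mul_poch 1 h
    have hc : constantCoeff (qqPoch n * qqPoch (r - n)) = ((1 : ℤˣ) : ℤ) := by
      rw [map_mul, qqPoch_eq, qqPoch_eq, constantCoeff_poch 1 n one_pos,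
        constantCoeff_poch 1 _ one_pos]
      norm_num
    have hinv := PowerSeries.mul_invOfUnit (qqPoch n * qqPoch (r - n)) 1 hc
    have key' : qqPoch r = gb 1 r n * (qqPoch n * qqPoch (r - n)) := by
      rw [qqPoch_eq, qqPoch_eq, qqPoch_eq]
      exact key.symm
    rw [key', mul_assoc, hinv, mul_one]
  · exact (gb_eq_zero 1 (by omega)).symm

lemma schurA_gb (m : ℕ) :
    schurA m = ∑ n ∈ Finset.range (m + 1), (X : R) ^ (n ^ 2) * gb 1 (m - n) n := by
  unfold schurA
  exact Finset.sum_congr rfl fun n _ => by rw [qBinom_eq_gb]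

lemma schurA_rec (m : ℕ) :
    schurA (m + 2) = schurA (m + 1) + (X : R) ^ (m + 1) * schurA m := by
  rw [schurA_gb, schurA_gb, schurA_gb]
  rw [Finset.sum_range_succ' (fun n => (X : R) ^ (n ^ 2) * gb 1 (m + 2 - n) n) (m + 2)]
  rw [Finset.sum_range_succ (fun k => (X : R) ^ ((k+1) ^ 2) * gb 1 (m + 2 - (k+1)) (k+1)) (m + 1)]
  have htop : (X : R) ^ ((m + 2) ^ 2) * gb 1 (m + 2 - (m + 2)) (m + 2) = 0 := by
    rw [Nat.sub_self, gb_eq_zero 1 (by omega), mul_zero]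
  rw [htop, add_zero]
  have hsplit : ∀ k ∈ Finset.range (m + 1),
      (X : R) ^ ((k+1) ^ 2) * gb 1 (m + 2 - (k+1)) (k+1)
        = (X : R) ^ ((k+1) ^ 2) * gb 1 (m + 1 - (k+1)) (k+1)
          + (X : R) ^ (k ^ 2 + (m + 1)) * gb 1 (m - k) k := by
    intro k hk
    have hk' : k ≤ m := by simpa using Nat.lt_succ_iff.mp (Finset.mem_range.mp hk)
    have h1 : m + 2 - (k + 1) = (m - k) + 1 := by omega
    have h2 : m + 1 - (k + 1) = m - k := by omega
    rw [h1, h2, pascal1 1 (m - k) k]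
    rcases Nat.lt_or_ge m (2 * k) with h3 | h3
    · rw [gb_eq_zero 1 (show m - k < k by omega), mul_zero, add_zero, mul_zero, add_zero]
    · have h4 : (k + 1) ^ 2 + 1 * (m - k - k) = k ^ 2 + (m + 1) := by
        have : (k + 1) ^ 2 = k ^ 2 + 2 * k + 1 := by ring
        omega
      rw [mul_add]
      congr 1
      rw [← mul_assoc, ← pow_add, h4]
  rw [Finset.sum_congr rfl hsplit, Finset.sum_add_distrib]
  have hX : ∀ k : ℕ, (X : R) ^ (k ^ 2 + (m + 1)) * gb 1 (m - k) k
      = (X:R) ^ (m+1) * ((X:R) ^ (k^2) * gb 1 (m - k) k) := by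
    intro k; rw [← mul_assoc, ← pow_add, Nat.add_comm]
  rw [Finset.sum_congr rfl (fun k _ => hX k), ← Finset.mul_sum]
  rw [Finset.sum_range_succ' (fun n => (X : R) ^ (n ^ 2) * gb 1 (m + 1 - n) n) (m + 1)]
  push_cast
  ring_nf
  simp [gb_zero_right]

/-- `λ_j = j(5j+1)/2 ∈ ℕ`. -/
def lam (j : ℤ) : ℕ := (j * (5 * j + 1)).toNat / 2

lemma lam_nonneg (j : ℤ) : 0 ≤ j * (5 * j + 1) := by nlinarith [sq_nonneg j, sq_nonneg (j+1)]

lemma lam_two_mul (j : ℤ) : (lam j : ℤ) * 2 = j * (5 * j + 1) := by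
  have h0 := lam_nonneg j
  have he : Even (j * (5 * j + 1)) := by
    rcases Int.even_or_odd j with h | h
    · exact h.mul_right _
    · have : Even (5 * j + 1) := by
        rcases h with ⟨k, hk⟩
        exact ⟨5 * k + 3, by omega⟩
      exact this.mul_left _
  obtain ⟨k, hk⟩ := he
  rw [lam]
  omega

lemma lam_succ (j : ℤ) : (lam (j + 1) : ℤ) = (lam j : ℤ) + 5 * j + 3 := by
  have h1 := lam_two_mul (j + 1)
  have h2 := lam_two_mul j
  nlinarith [h1, h2]

lemma lam_ge (j : ℤ) : (j * j : ℤ) ≤ (lam j : ℤ) := by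
  have := lam_two_mul j
  nlinarith [sq_nonneg (j+1), sq_nonneg j]

/-- sign `(-1)^j`. -/
def sg (j : ℤ) : R := if Even j then 1 else -1

lemma sg_succ (j : ℤ) : sg (j + 1) = - sg j := by
  rcases Int.even_or_odd j with h | h
  · have h1 : ¬ Even (j + 1) := by simp [Int.even_add_one, h]
    simp [sg, h, h1]
  · have h0 : ¬ Even j := Int.not_even_iff_odd.mpr h
    have h1 : Even (j + 1) := by simp [Int.even_add_one, h0, h]
    simp [sg, h0, h1]

/-- index `⌊(m - 5j)/2⌋`. -/
def idx (m : ℕ) (j : ℤ) : ℕ := (((m : ℤ) - 5 * j) / 2).toNat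

/-- The Schur/theta term. -/
def F (m : ℕ) (j : ℤ) : R :=
  if 5 * j ≤ (m : ℤ) then sg j * (X : R) ^ (lam j) * gb 1 m (idx m j) else 0

/-- telescoping certificate. -/
def Tc (m : ℕ) (j : ℤ) : R :=
  if 0 ≤ (m : ℤ) - 5 * j ∧ Even ((m : ℤ) - 5 * j) then
    sg j * (X : R) ^ (lam j) * ((X : R) ^ (idx m j) * gb 1 (m - 2) (idx m j))
  else 0


lemma Xpow_mul1 (s t u : ℕ) (h : s + t = u) : (X : R) ^ s * X ^ t = X ^ u := by
  rw [← pow_add, h]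

lemma I1 (m h : ℕ) :
    gb 1 (m + 2) (h + 1) =
      gb 1 (m + 1) h + (X : R) ^ (m + 1) * gb 1 m h + (X : R) ^ (h + 1) * gb 1 m (h + 1) := by
  rcases le_or_gt h m with hh | hh
  · have p2 := pascal2 1 (m + 1) h
    have p1 := pascal1 1 m h
    have e : (X : R) ^ (h + 1) * X ^ (m - h) = X ^ (m + 1) := Xpow_mul1 _ _ _ (by omega)
    simp only [one_mul] at p2 p1
    linear_combination p2 + (X : R) ^ (h + 1) * p1 + gb 1 m h * e
  · rcases eq_or_lt_of_le (Nat.succ_le_of_lt hh) with hh2 | hh2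
    · rw [← hh2, gb_self, gb_self, gb_eq_zero 1 (by omega), gb_eq_zero 1 (by omega)]
      ring
    · rw [gb_eq_zero 1 (by omega), gb_eq_zero 1 (by omega), gb_eq_zero 1 (by omega),
        gb_eq_zero 1 (by omega)]
      ring

lemma I2 (m k : ℕ) (hk : k ≤ m) :
    gb 1 (m + 2) (k + 2) =
      gb 1 (m + 1) (k + 2) + (X : R) ^ (m + 1) * gb 1 m (k + 1) +
        (X : R) ^ (m - k) * gb 1 m k := by
  have p1 := pascal1 1 (m + 1) (k + 1)
  have er : m + 1 - (k + 1) = m - k := by omega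
  rw [er] at p1
  have p2 := pascal2 1 m k
  have e : (X : R) ^ (m - k) * X ^ (k + 1) = X ^ (m + 1) := Xpow_mul1 _ _ _ (by omega)
  simp only [one_mul] at p1 p2
  linear_combination p1 + (X : R) ^ (m - k) * p2 + gb 1 m (k + 1) * e

lemma I2old (m k : ℕ) (hk : k ≤ m) :
    gb 1 (m + 2) (k + 2) =
      gb 1 (m + 1) (k + 2) + (X : R) ^ (m + 1) * gb 1 m (k + 1) +
        (X : R) ^ (m - k) * gb 1 m k := by
  have p1 := pascal1 1 (m + 1) (k + 1)
  have er : m + 1 - (k + 1) = m - k := by omega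
  rw [er] at p1
  have p2 := pascal2 1 m k
  have e : (X : R) ^ (m - k) * X ^ (k + 1) = X ^ (m + 1) := Xpow_mul1 _ _ _ (by omega)
  simp only [one_mul] at p1 p2
  linear_combination p1 + (X : R) ^ (m - k) * p2 + gb 1 m (k + 1) * e

lemma F_pos {m : ℕ} {j : ℤ} (h : 5 * j ≤ (m : ℤ)) {h' : ℕ} (hi : idx m j = h') :
    F m j = sg j * (X : R) ^ (lam j) * gb 1 m h' := by rw [F, if_pos h, hi]

lemma F_neg {m : ℕ} {j : ℤ} (h : ¬ 5 * j ≤ (m : ℤ)) : F m j = 0 := if_neg h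

lemma Tc_pos {m : ℕ} {j : ℤ} (h1 : 0 ≤ (m : ℤ) - 5 * j) (h2 : Even ((m : ℤ) - 5 * j))
    {h' : ℕ} (hi : idx m j = h') :
    Tc m j = sg j * (X : R) ^ (lam j) * ((X : R) ^ h' * gb 1 (m - 2) h') := by
  rw [Tc, if_pos ⟨h1, h2⟩, hi]

lemma Tc_neg {m : ℕ} {j : ℤ}
    (h : ¬ (0 ≤ (m : ℤ) - 5 * j ∧ Even ((m : ℤ) - 5 * j))) : Tc m j = 0 := if_neg h

lemma Dstep (m : ℕ) (j : ℤ) :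
    F (m + 2) j - F (m + 1) j - (X : R) ^ (m + 1) * F m j = Tc (m + 2) j - Tc (m + 2) (j + 1) := by
  by_cases h5 : 5 * j ≤ ((m + 2 : ℕ) : ℤ)
  · have hpar := Int.emod_emod_of_dvd ((m + 2 : ℤ) - 5 * j) (dvd_refl 2)
    rcases Int.even_or_odd (((m + 2 : ℕ) : ℤ) - 5 * j) with hev | hod
    · -- s = 2K even
      obtain ⟨K, hK⟩ : ∃ K : ℕ, ((m + 2 : ℕ) : ℤ) - 5 * j = 2 * K := by
        obtain ⟨t, ht⟩ := hev; exact ⟨(((m + 2 : ℕ) : ℤ) - 5 * j).toNat / 2, by omega⟩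
      rcases Nat.eq_zero_or_pos K with rfl | hKpos
      · -- s = 0
        rw [F_pos h5 (show idx (m + 2) j = 0 by unfold idx; omega),
          F_neg (show ¬ 5 * j ≤ ((m + 1 : ℕ) : ℤ) by push_cast; omega),
          F_neg (show ¬ 5 * j ≤ ((m : ℕ) : ℤ) by push_cast; omega),
          Tc_pos (by omega) hev (show idx (m + 2) j = 0 by unfold idx; omega),
          Tc_neg (show ¬ _ by rintro ⟨a, -⟩; push_cast at a; omega)]
        simp only [Nat.add_sub_cancel, gb_zero_right]
        ring
      · obtain ⟨k, rfl⟩ : ∃ k, K = k + 1 := ⟨K - 1, by omega⟩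
        -- s = 2k + 2
        have hI := I1 m k
        rw [F_pos h5 (show idx (m + 2) j = k + 1 by unfold idx; omega),
          F_pos (show 5 * j ≤ ((m + 1 : ℕ) : ℤ) by push_cast; omega)
            (show idx (m + 1) j = k by unfold idx; omega),
          F_pos (show 5 * j ≤ ((m : ℕ) : ℤ) by push_cast; omega)
            (show idx m j = k by unfold idx; omega),
          Tc_pos (by omega) hev (show idx (m + 2) j = k + 1 by unfold idx; omega),
          Tc_neg (show ¬ _ by
            rintro ⟨a, b⟩
            rw [Int.even_iff] at b
            push_cast at a b
            omega)]
        simp only [Nat.add_sub_cancel]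
        linear_combination (sg j * (X : R) ^ (lam j)) * hI
    · -- s = 2K + 1 odd
      obtain ⟨K, hK⟩ : ∃ K : ℕ, ((m + 2 : ℕ) : ℤ) - 5 * j = 2 * K + 1 := by
        obtain ⟨t, ht⟩ := hod; exact ⟨((((m + 2 : ℕ) : ℤ) - 5 * j) / 2).toNat, by omega⟩
      have hodd' : ¬ Even (((m + 2 : ℕ) : ℤ) - 5 * j) := by
        rw [Int.even_iff]; omega
      match K, hK with
      | 0, hK =>
        -- s = 1
        rw [F_pos h5 (show idx (m + 2) j = 0 by unfold idx; omega),
          F_pos (show 5 * j ≤ ((m + 1 : ℕ) : ℤ) by push_cast; omega)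
            (show idx (m + 1) j = 0 by unfold idx; omega),
          F_neg (show ¬ 5 * j ≤ ((m : ℕ) : ℤ) by push_cast; omega),
          Tc_neg (fun hc => hodd' hc.2),
          Tc_neg (show ¬ _ by rintro ⟨a, -⟩; push_cast at a; omega)]
        simp only [gb_zero_right]
        ring
      | 1, hK =>
        -- s = 3
        have p := pascal1 1 (m + 1) 0
        simp only [one_mul, Nat.sub_zero, gb_zero_right, mul_one] at p
        rw [F_pos h5 (show idx (m + 2) j = 1 by unfold idx; omega),
          F_pos (show 5 * j ≤ ((m + 1 : ℕ) : ℤ) by push_cast; omega)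
            (show idx (m + 1) j = 1 by unfold idx; omega),
          F_pos (show 5 * j ≤ ((m : ℕ) : ℤ) by push_cast; omega)
            (show idx m j = 0 by unfold idx; omega),
          Tc_neg (fun hc => hodd' hc.2),
          Tc_neg (show ¬ _ by rintro ⟨a, -⟩; push_cast at a; omega)]
        simp only [gb_zero_right, mul_one]
        linear_combination (sg j * (X : R) ^ (lam j)) * p
      | (k + 2), hK =>
        -- s = 2k + 5
        rcases le_or_gt k m with hkm | hkm
        case inr =>
          -- k > m : everything vanishes
          rw [F_pos h5 (show idx (m + 2) j = k + 2 by unfold idx; omega),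
            F_pos (show 5 * j ≤ ((m + 1 : ℕ) : ℤ) by push_cast; omega)
              (show idx (m + 1) j = k + 2 by unfold idx; omega),
            F_pos (show 5 * j ≤ ((m : ℕ) : ℤ) by push_cast; omega)
              (show idx m j = k + 1 by unfold idx; omega),
            Tc_neg (fun hc => hodd' hc.2),
            Tc_pos (show (0:ℤ) ≤ ((m + 2 : ℕ) : ℤ) - 5 * (j + 1) by push_cast; omega)
              (show Even (((m + 2 : ℕ) : ℤ) - 5 * (j + 1)) by rw [Int.even_iff]; omega)
              (show idx (m + 2) (j + 1) = k by unfold idx; omega)]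
          simp only [Nat.add_sub_cancel]
          rw [gb_eq_zero 1 (show m + 2 < k + 2 by omega),
            gb_eq_zero 1 (show m + 1 < k + 2 by omega),
            gb_eq_zero 1 (show m < k + 1 by omega),
            gb_eq_zero 1 (show m < k by omega)]
          ring
        have hI := I2 m k hkm
        have hsucc := lam_succ j
        have hXe : (X : R) ^ (lam j) * (X : R) ^ (m - k) =
            (X : R) ^ (lam (j + 1)) * (X : R) ^ k := by
          rw [← pow_add, ← pow_add]
          congr 1
          omega
        rw [F_pos h5 (show idx (m + 2) j = k + 2 by unfold idx; omega),
          F_pos (show 5 * j ≤ ((m + 1 : ℕ) : ℤ) by push_cast; omega)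
            (show idx (m + 1) j = k + 2 by unfold idx; omega),
          F_pos (show 5 * j ≤ ((m : ℕ) : ℤ) by push_cast; omega)
            (show idx m j = k + 1 by unfold idx; omega),
          Tc_neg (fun hc => hodd' hc.2),
          Tc_pos (show (0:ℤ) ≤ ((m + 2 : ℕ) : ℤ) - 5 * (j + 1) by push_cast; omega)
            (show Even (((m + 2 : ℕ) : ℤ) - 5 * (j + 1)) by
              rw [Int.even_iff]; omega)
            (show idx (m + 2) (j + 1) = k by unfold idx; omega),
          sg_succ]
        simp only [Nat.add_sub_cancel]
        linear_combination (sg j * (X : R) ^ (lam j)) * hI +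
          (sg j * gb 1 m k) * hXe
  · -- all vanish
    rw [F_neg h5, F_neg (show ¬ 5 * j ≤ ((m + 1 : ℕ) : ℤ) by push_cast at h5 ⊢; omega),
      F_neg (show ¬ 5 * j ≤ ((m : ℕ) : ℤ) by push_cast at h5 ⊢; omega),
      Tc_neg (show ¬ _ by rintro ⟨a, -⟩; push_cast at h5 a; omega),
      Tc_neg (show ¬ _ by rintro ⟨a, -⟩; push_cast at h5 a; omega)]
    ring


/-- partial theta-type sum. -/
def eP (J m : ℕ) : R := ∑ k ∈ Finset.range (2 * J + 1), F m ((k : ℤ) - (J : ℤ))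

lemma Tc_zero_hi (m2 : ℕ) {j : ℤ} (h : (m2 : ℤ) < 5 * j) : Tc m2 j = 0 :=
  Tc_neg (by rintro ⟨a, -⟩; omega)

lemma Tc_zero_lo (m2 : ℕ) {j : ℤ} (h : 2 * (m2 : ℤ) < (m2 : ℤ) - 5 * j) : Tc m2 j = 0 := by
  rw [Tc]
  split_ifs with hg
  · obtain ⟨h1, h2⟩ := hg
    rw [Int.even_iff] at h2
    have hbig : m2 - 2 < idx m2 j := by unfold idx; omega
    rw [gb_eq_zero 1 hbig, mul_zero, mul_zero]
  · rfl

lemma eP_rec (J m : ℕ) (hJ : m + 2 ≤ J) :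
    eP J (m + 2) = eP J (m + 1) + (X : R) ^ (m + 1) * eP J m := by
  have h1 : eP J (m + 2) - eP J (m + 1) - (X : R) ^ (m + 1) * eP J m =
      ∑ k ∈ Finset.range (2 * J + 1),
        (F (m + 2) ((k : ℤ) - J) - F (m + 1) ((k : ℤ) - J) -
          (X : R) ^ (m + 1) * F m ((k : ℤ) - J)) := by
    rw [eP, eP, eP, Finset.mul_sum, ← Finset.sum_sub_distrib, ← Finset.sum_sub_distrib]
  have h2 : ∑ k ∈ Finset.range (2 * J + 1),
        (F (m + 2) ((k : ℤ) - J) - F (m + 1) ((k : ℤ) - J) -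
          (X : R) ^ (m + 1) * F m ((k : ℤ) - J)) =
      ∑ k ∈ Finset.range (2 * J + 1),
        (Tc (m + 2) ((k : ℤ) - (J : ℤ)) - Tc (m + 2) (((k + 1 : ℕ) : ℤ) - (J : ℤ))) := by
    refine Finset.sum_congr rfl fun k _ => ?_
    rw [Dstep]
    congr 2
    push_cast
    ring
  have h3 := Finset.sum_range_sub' (fun k : ℕ => Tc (m + 2) ((k : ℤ) - (J : ℤ))) (2 * J + 1)
  have hb0 : Tc (m + 2) (((0 : ℕ) : ℤ) - (J : ℤ)) = 0 :=
    Tc_zero_lo (m + 2) (by push_cast; omega)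
  have hbT : Tc (m + 2) (((2 * J + 1 : ℕ) : ℤ) - (J : ℤ)) = 0 :=
    Tc_zero_hi (m + 2) (by push_cast; omega)
  have h4 : eP J (m + 2) - eP J (m + 1) - (X : R) ^ (m + 1) * eP J m = 0 := by
    rw [h1, h2, h3, hb0, hbT]
    ring
  linear_combination h4

lemma sg_zero : sg 0 = 1 := by simp [sg]

lemma lam_zero : lam 0 = 0 := by simp [lam]

lemma eP_zero (J : ℕ) : eP J 0 = 1 := by
  rw [eP, Finset.sum_eq_single_of_mem J (Finset.mem_range.mpr (by omega))]
  · rw [sub_self, F_pos (by norm_num) (show idx 0 0 = 0 by unfold idx; norm_num),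
      sg_zero, lam_zero, gb_zero_right]
    norm_num
  · intro k hk hne
    rcases lt_or_gt_of_ne (show (k : ℤ) - J ≠ 0 by
      intro hc; exact hne (by omega)) with hlt | hgt
    · rw [F_pos (by omega) (show idx 0 ((k:ℤ) - J) = idx 0 ((k:ℤ) - J) from rfl)]
      rw [gb_eq_zero 1 (show 0 < idx 0 ((k:ℤ)-J) by unfold idx; omega), mul_zero]
    · exact F_neg (by omega)

lemma eP_one (J : ℕ) : eP J 1 = 1 := by
  rw [eP, Finset.sum_eq_single_of_mem J (Finset.mem_range.mpr (by omega))]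
  · rw [sub_self, F_pos (by norm_num) (show idx 1 0 = 0 by unfold idx; norm_num),
      sg_zero, lam_zero, gb_zero_right]
    norm_num
  · intro k hk hne
    rcases lt_or_gt_of_ne (show (k : ℤ) - J ≠ 0 by
      intro hc; exact hne (by omega)) with hlt | hgt
    · rw [F_pos (by omega) (show idx 1 ((k:ℤ) - J) = idx 1 ((k:ℤ) - J) from rfl)]
      rw [gb_eq_zero 1 (show 1 < idx 1 ((k:ℤ)-J) by unfold idx; omega), mul_zero]
    · exact F_neg (by omega)

lemma schurA_one : schurA 1 = 1 := by
  rw [schurA_gb]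
  rw [show (1:ℕ) + 1 = 2 from rfl, Finset.sum_range_succ, Finset.sum_range_one]
  rw [gb_eq_zero 1 (show 1 - 1 < 1 by omega), gb_zero_right]
  simp

lemma schurA_zero : schurA 0 = 1 := by
  rw [schurA_gb, Finset.sum_range_one, gb_zero_right]
  simp

lemma schurA_eq_eP : ∀ m J : ℕ, m ≤ J → schurA m = eP J m := by
  intro m
  induction m using Nat.strong_induction_on with
  | _ m ih =>
    match m with
    | 0 => intro J _; rw [schurA_zero, eP_zero]
    | 1 => intro J _; rw [schurA_one, eP_one]
    | (m + 2) =>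
      intro J hJ
      rw [schurA_rec, eP_rec J m hJ, ih (m + 1) (by omega) J (by omega),
        ih m (by omega) J (by omega)]


/-- triangular numbers. -/
def T : ℕ → ℕ
  | 0 => 0
  | k + 1 => T k + k

lemma T_two_mul (k : ℕ) : ((T k : ℤ)) * 2 = (k : ℤ) * ((k : ℤ) - 1) := by
  induction k with
  | zero => rfl
  | succ k ih =>
      have h : T (k + 1) = T k + k := rfl
      rw [h]
      push_cast
      linear_combination ih

lemma sum_range_id_T (N : ℕ) : ∑ j ∈ Finset.range N, j = T N := by
  induction N with
  | zero => rfl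
  | succ N ih => rw [Finset.sum_range_succ, ih]; rfl

/-- homogeneous finite q-binomial theorem. -/
lemma bin2 (b : ℕ) : ∀ (n a c : ℕ),
    ∏ j ∈ Finset.range n, ((X : R) ^ a - (X : R) ^ (c + b * j)) =
      ∑ k ∈ Finset.range (n + 1),
        (-1) ^ k * (X : R) ^ (b * T k + c * k + a * (n - k)) * gb b n k := by
  intro n
  induction n with
  | zero =>
      intro a c
      simp [T, gb_zero_right]
  | succ n ih =>
      intro a c
      rw [Finset.prod_range_succ, ih a c]
      -- RHS: peel k = 0 and apply pascal1
      rw [Finset.sum_range_succ' (fun k =>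
        (-1) ^ k * (X : R) ^ (b * T k + c * k + a * (n + 1 - k)) * gb b (n + 1) k) (n + 1)]
      have hsplit : ∀ l ∈ Finset.range (n + 1),
          (-1) ^ (l + 1) * (X : R) ^ (b * T (l + 1) + c * (l + 1) + a * (n + 1 - (l + 1))) *
              gb b (n + 1) (l + 1)
            = (-1) ^ (l + 1) * (X : R) ^ (b * T (l + 1) + c * (l + 1) + a * (n - l)) *
                gb b n (l + 1)
              + (-1) ^ (l + 1) *
                  (X : R) ^ (b * T (l + 1) + c * (l + 1) + a * (n - l) + b * (n - l)) *
                  gb b n l := by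
        intro l _
        have e0 : n + 1 - (l + 1) = n - l := by omega
        rw [e0, pascal1 b n l]
        rw [mul_add]
        congr 1
        rw [pow_add]
        ring
      rw [Finset.sum_congr rfl hsplit, Finset.sum_add_distrib]
      -- LHS expansion
      rw [mul_sub, Finset.sum_mul, Finset.sum_mul]
      -- match the three pieces
      have hM : (-1 : R) ^ (0:ℕ) * (X : R) ^ (b * T 0 + c * 0 + a * (n + 1 - 0)) *
          gb b (n + 1) 0 = (X : R) ^ (a * (n + 1)) := by
        simp [T, gb_zero_right]
      rw [hM]
      -- second sum of RHS equals minus the X^{c+bn} part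
      have hS2 : ∑ l ∈ Finset.range (n + 1),
          (-1) ^ (l + 1) * (X : R) ^ (b * T (l + 1) + c * (l + 1) + a * (n - l) + b * (n - l)) *
            gb b n l
          = - ∑ k ∈ Finset.range (n + 1),
              (-1) ^ k * (X : R) ^ (b * T k + c * k + a * (n - k)) * gb b n k *
                (X : R) ^ (c + b * n) := by
        rw [← Finset.sum_neg_distrib]
        refine Finset.sum_congr rfl fun l hl => ?_
        have hl' : l ≤ n := by
          have := Finset.mem_range.mp hl; omega
        obtain ⟨s, rfl⟩ : ∃ s, n = l + s := ⟨n - l, by omega⟩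
        have e1 : l + s - l = s := by omega
        rw [e1]
        simp only [T]
        have epow : (X : R) ^ (b * (T l + l) + c * (l + 1) + a * s + b * s)
            = (X : R) ^ (b * T l + c * l + a * s) * (X : R) ^ (c + b * (l + s)) := by
          rw [← pow_add]; congr 1; ring
        rw [epow]
        ring
      rw [hS2]
      -- first sum of RHS plus monomial equals the X^a part
      have hS1 : ∑ k ∈ Finset.range (n + 1),
            (-1) ^ k * (X : R) ^ (b * T k + c * k + a * (n - k)) * gb b n k * (X : R) ^ a
          = (X : R) ^ (a * (n + 1)) +
            ∑ l ∈ Finset.range (n + 1),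
              (-1) ^ (l + 1) * (X : R) ^ (b * T (l + 1) + c * (l + 1) + a * (n - l)) *
                gb b n (l + 1) := by
        rw [Finset.sum_range_succ (fun l =>
          (-1) ^ (l + 1) * (X : R) ^ (b * T (l + 1) + c * (l + 1) + a * (n - l)) *
            gb b n (l + 1)) n]
        rw [gb_eq_zero b (show n < n + 1 by omega), mul_zero, add_zero]
        rw [Finset.sum_range_succ' (fun k =>
          (-1) ^ k * (X : R) ^ (b * T k + c * k + a * (n - k)) * gb b n k * (X : R) ^ a) n]
        have h0 : (-1 : R) ^ (0:ℕ) * (X : R) ^ (b * T 0 + c * 0 + a * (n - 0)) * gb b n 0 *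
            (X : R) ^ a = (X : R) ^ (a * (n + 1)) := by
          rw [pow_zero, one_mul, gb_zero_right, mul_one, ← pow_add]
          congr 1
          simp only [T, Nat.sub_zero]
          ring
        rw [h0, add_comm]
        congr 1
        refine Finset.sum_congr rfl fun l hl => ?_
        have hl' : l ≤ n - 1 := by
          have := Finset.mem_range.mp hl; omega
        have hln : l + 1 ≤ n := by
          have := Finset.mem_range.mp hl; omega
        obtain ⟨s, rfl⟩ : ∃ s, n = (l + 1) + s := ⟨n - (l + 1), by omega⟩
        have e1 : l + 1 + s - (l + 1) = s := by omega
        have e2 : l + 1 + s - l = s + 1 := by omega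
        rw [e1, e2]
        have epow : (X : R) ^ (b * T (l + 1) + c * (l + 1) + a * (s + 1))
            = (X : R) ^ (b * T (l + 1) + c * (l + 1) + a * s) * (X : R) ^ a := by
          rw [← pow_add]; congr 1; ring
        rw [epow]
        ring
      rw [hS1]
      ring
lemma sg_sub_eq (a b : ℕ) : sg ((a : ℤ) - b) = (-1 : R) ^ (a + b) := by
  have hiff : Even ((a : ℤ) - b) ↔ Even (a + b) := by
    rw [Int.even_iff, Nat.even_iff]; omega
  rcases Nat.even_or_odd (a + b) with h | h
  · rw [sg, if_pos (hiff.mpr h), h.neg_one_pow]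
  · rw [sg, if_neg (fun hc => (Nat.not_even_iff_odd.mpr h) (hiff.mp hc)), h.neg_one_pow]

lemma star (N : ℕ) (hN : 1 ≤ N) :
    (∏ i ∈ Finset.range N, (1 - (X : R) ^ (5 * i + 3))) *
      ∏ i ∈ Finset.range N, (1 - (X : R) ^ (5 * i + 2)) =
    ∑ k ∈ Finset.range (2 * N + 1),
      sg ((N : ℤ) - k) * (X : R) ^ (lam ((N : ℤ) - k)) * gb 5 (2 * N) k := by
  have hb := bin2 5 (2 * N) (5 * N - 2) 0
  -- split the product
  have hsplit : ∏ j ∈ Finset.range (2 * N), ((X : R) ^ (5 * N - 2) - (X : R) ^ (0 + 5 * j))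
      = ((-1 : R) ^ N * (X : R) ^ (5 * T N) *
          ∏ i ∈ Finset.range N, (1 - (X : R) ^ (5 * i + 3))) *
        ((X : R) ^ ((5 * N - 2) * N) *
          ∏ i ∈ Finset.range N, (1 - (X : R) ^ (5 * i + 2))) := by
    rw [two_mul, Finset.prod_range_add]
    congr 1
    · have hterm : ∀ j ∈ Finset.range N, (X : R) ^ (5 * N - 2) - (X : R) ^ (0 + 5 * j)
          = (-1) * ((X : R) ^ (5 * j) * (1 - (X : R) ^ (5 * (N - 1 - j) + 3))) := by
        intro j hj
        have hj' : j < N := Finset.mem_range.mp hj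
        have e : 5 * j + (5 * (N - 1 - j) + 3) = 5 * N - 2 := by omega
        rw [zero_add, show (X : R) ^ (5 * N - 2) = X ^ (5 * j) * X ^ (5 * (N - 1 - j) + 3) by
          rw [← pow_add, e]]
        ring
      rw [Finset.prod_congr rfl hterm, Finset.prod_mul_distrib, Finset.prod_mul_distrib,
        Finset.prod_const, Finset.card_range,
        Finset.prod_pow_eq_pow_sum, ← Finset.mul_sum, sum_range_id_T,
        Finset.prod_range_reflect (fun i => 1 - (X : R) ^ (5 * i + 3)) N]
      ring
    · have hterm : ∀ j ∈ Finset.range N, (X : R) ^ (5 * N - 2) - (X : R) ^ (0 + 5 * (N + j))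
          = (X : R) ^ (5 * N - 2) * (1 - (X : R) ^ (5 * j + 2)) := by
        intro j hj
        have e : 5 * N - 2 + (5 * j + 2) = 0 + 5 * (N + j) := by omega
        rw [mul_sub, mul_one, ← pow_add, e]
      rw [Finset.prod_congr rfl hterm, Finset.prod_mul_distrib, Finset.prod_const,
        Finset.card_range, ← pow_mul]
  -- rewrite the sum side
  have hRHS : ∑ k ∈ Finset.range (2 * N + 1),
        (-1) ^ k * (X : R) ^ (5 * T k + 0 * k + (5 * N - 2) * (2 * N - k)) * gb 5 (2 * N) k
      = (X : R) ^ (5 * T N + (5 * N - 2) * N) *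
        ∑ k ∈ Finset.range (2 * N + 1),
          (-1) ^ k * (X : R) ^ (lam ((N : ℤ) - k)) * gb 5 (2 * N) k := by
    rw [Finset.mul_sum]
    refine Finset.sum_congr rfl fun k hk => ?_
    have hk' : k ≤ 2 * N := by have := Finset.mem_range.mp hk; omega
    have ekey : 5 * T k + 0 * k + (5 * N - 2) * (2 * N - k)
        = (5 * T N + (5 * N - 2) * N) + lam ((N : ℤ) - k) := by
      have tt := T_two_mul k
      have tN := T_two_mul N
      have lt := lam_two_mul ((N : ℤ) - k)
      have h2x : ((5 * T k + 0 * k + (5 * N - 2) * (2 * N - k) : ℕ) : ℤ) * 2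
          = (((5 * T N + (5 * N - 2) * N) + lam ((N : ℤ) - k) : ℕ) : ℤ) * 2 := by
        have h25 : 2 ≤ 5 * N := by omega
        push_cast [h25, hk']
        linear_combination 5 * tt - 5 * tN - lt
      omega
    rw [ekey, pow_add]
    ring
  rw [hsplit, hRHS] at hb
  have hXD : ((-1 : R) ^ N * (X : R) ^ (5 * T N) *
          ∏ i ∈ Finset.range N, (1 - (X : R) ^ (5 * i + 3))) *
        ((X : R) ^ ((5 * N - 2) * N) *
          ∏ i ∈ Finset.range N, (1 - (X : R) ^ (5 * i + 2)))
      = (X : R) ^ (5 * T N + (5 * N - 2) * N) *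
        ((-1 : R) ^ N * ((∏ i ∈ Finset.range N, (1 - (X : R) ^ (5 * i + 3))) *
          ∏ i ∈ Finset.range N, (1 - (X : R) ^ (5 * i + 2)))) := by
    rw [pow_add]
    ring
  rw [hXD] at hb
  have hc := mul_left_cancel₀ (pow_ne_zero _ (X_ne_zero : (X : R) ≠ 0)) hb
  have hsq : (-1 : R) ^ N * (-1 : R) ^ N = 1 := by
    rw [← pow_add]
    exact Even.neg_one_pow ⟨N, rfl⟩
  calc (∏ i ∈ Finset.range N, (1 - (X : R) ^ (5 * i + 3))) *
        ∏ i ∈ Finset.range N, (1 - (X : R) ^ (5 * i + 2))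
      = (-1 : R) ^ N * ((-1 : R) ^ N * ((∏ i ∈ Finset.range N, (1 - (X : R) ^ (5 * i + 3))) *
          ∏ i ∈ Finset.range N, (1 - (X : R) ^ (5 * i + 2)))) := by
        rw [← mul_assoc, hsq, one_mul]
    _ = (-1 : R) ^ N * ∑ k ∈ Finset.range (2 * N + 1),
          (-1) ^ k * (X : R) ^ (lam ((N : ℤ) - k)) * gb 5 (2 * N) k := by rw [hc]
    _ = ∑ k ∈ Finset.range (2 * N + 1),
          sg ((N : ℤ) - k) * (X : R) ^ (lam ((N : ℤ) - k)) * gb 5 (2 * N) k := by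
        rw [Finset.mul_sum]
        refine Finset.sum_congr rfl fun k hk => ?_
        rw [sg_sub_eq, pow_add]
        ring


/-! ### Part E : working modulo `X^m` -/

def Imod (m : ℕ) : Ideal R := Ideal.span {(X : R) ^ m}

abbrev S (m : ℕ) := R ⧸ Imod m

def ph (m : ℕ) : R →+* S m := Ideal.Quotient.mk (Imod m)

lemma ph_X_pow {m e : ℕ} (h : m ≤ e) : ph m ((X : R) ^ e) = 0 := by
  rw [show (X : R) ^ e = (X : R) ^ m * X ^ (e - m) by rw [← pow_add]; congr 1; omega, map_mul]
  have h0 : ph m ((X : R) ^ m) = 0 := by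
    rw [ph, Ideal.Quotient.eq_zero_iff_mem, Imod]
    exact Ideal.subset_span rfl
  rw [h0, zero_mul]

lemma ph_one_sub_X_pow {m e : ℕ} (h : m ≤ e) : ph m (1 - (X : R) ^ e) = 1 := by
  rw [map_sub, map_one, ph_X_pow h, sub_zero]

lemma poch_congr {m b n : ℕ} (hm : m ≤ b * (n + 1)) :
    ∀ n', n ≤ n' → ph m (poch b n') = ph m (poch b n) := by
  intro n' h
  induction n', h using Nat.le_induction with
  | base => rfl
  | succ n' hn ih =>
      have hstep : m ≤ b * (n' + 1) := by
        have : b * (n + 1) ≤ b * (n' + 1) := Nat.mul_le_mul_left b (by omega)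
        omega
      rw [poch, Finset.prod_range_succ, ← poch, map_mul, ph_one_sub_X_pow hstep, mul_one, ih]

lemma poch_eq {m b : ℕ} (n n' : ℕ) (h1 : m ≤ b * (n + 1)) (h2 : m ≤ b * (n' + 1)) :
    ph m (poch b n') = ph m (poch b n) := by
  rcases le_total n n' with h | h
  · exact poch_congr h1 n' h
  · exact (poch_congr h2 n h).symm

lemma pochV (m b K : ℕ) (hb : 0 < b) :
    ph m (poch b K) * ph m (PowerSeries.invOfUnit (poch b K) 1) = 1 := by
  rw [← map_mul, PowerSeries.mul_invOfUnit _ _ (by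
    rw [constantCoeff_poch b K hb, Units.val_one]), map_one]

lemma gb_quot {m : ℕ} (b r n K : ℕ) (hb : 0 < b) (hn : n ≤ r)
    (h1 : m ≤ b * (n + 1)) (h2 : m ≤ b * (r - n + 1)) (h3 : m ≤ b * (K + 1)) :
    ph m (gb b r n) = ph m (PowerSeries.invOfUnit (poch b K) 1) := by
  have hmul := congrArg (ph m) (gb_mul_poch b hn)
  rw [map_mul, map_mul] at hmul
  have e1 : ph m (poch b n) = ph m (poch b K) := (poch_eq n K h1 h3).symm
  have e2 : ph m (poch b (r - n)) = ph m (poch b K) := (poch_eq (r - n) K h2 h3).symm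
  have e3 : ph m (poch b r) = ph m (poch b K) := by
    refine (poch_eq r K ?_ h3).symm
    have : b * (n + 1) ≤ b * (r + 1) := Nat.mul_le_mul_left b (by omega)
    omega
  rw [e1, e2, e3] at hmul
  have hV := pochV m b K hb
  calc ph m (gb b r n)
      = ph m (gb b r n) * (ph m (poch b K) * ph m (PowerSeries.invOfUnit (poch b K) 1)) *
        (ph m (poch b K) * ph m (PowerSeries.invOfUnit (poch b K) 1)) := by
        rw [hV, mul_one, mul_one]
    _ = (ph m (gb b r n) * (ph m (poch b K) * ph m (poch b K))) *
          (ph m (PowerSeries.invOfUnit (poch b K) 1) *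
            ph m (PowerSeries.invOfUnit (poch b K) 1)) := by ring
    _ = ph m (poch b K) * (ph m (PowerSeries.invOfUnit (poch b K) 1) *
            ph m (PowerSeries.invOfUnit (poch b K) 1)) := by rw [hmul]
    _ = (ph m (poch b K) * ph m (PowerSeries.invOfUnit (poch b K) 1)) *
          ph m (PowerSeries.invOfUnit (poch b K) 1) := by ring
    _ = ph m (PowerSeries.invOfUnit (poch b K) 1) := by rw [hV, one_mul]

lemma schurA_stable {m : ℕ} (hm : 1 ≤ m) : ∀ M, m ≤ M → ph m (schurA M) = ph m (schurA m) := by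
  intro M hM
  induction M, hM using Nat.le_induction with
  | base => rfl
  | succ M hM ih =>
      obtain ⟨k, rfl⟩ : ∃ k, M = k + 1 := ⟨M - 1, by omega⟩
      rw [schurA_rec k, map_add, map_mul, ph_X_pow (show m ≤ k + 1 by omega), zero_mul,
        add_zero, ih]

/-- truncated theta sum in the quotient. -/
def TT (m J : ℕ) : S m :=
  ∑ k ∈ Finset.range (2 * J + 1),
    ph m (sg ((k : ℤ) - (J : ℤ)) * (X : R) ^ (lam ((k : ℤ) - (J : ℤ))))

lemma lam_big {m : ℕ} {j : ℤ} (hj : (m : ℤ) ≤ j ∨ j ≤ -(m : ℤ)) : m ≤ lam j := by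
  have h := lam_ge j
  have h2 : (m : ℤ) ≤ (lam j : ℤ) := by
    rcases hj with h1 | h1 <;> nlinarith [Int.natCast_nonneg m]
  omega

lemma TT_stable {m : ℕ} (hm : 1 ≤ m) : ∀ J, m ≤ J → TT m J = TT m m := by
  intro J hJ
  induction J, hJ using Nat.le_induction with
  | base => rfl
  | succ J hJ ih =>
      rw [TT, show 2 * (J + 1) + 1 = (2 * J + 1) + 1 + 1 by omega,
        Finset.sum_range_succ, Finset.sum_range_succ']
      have htop : ph m (sg (((2 * J + 1 + 1 : ℕ) : ℤ) - ((J + 1 : ℕ) : ℤ)) *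
          (X : R) ^ (lam (((2 * J + 1 + 1 : ℕ) : ℤ) - ((J + 1 : ℕ) : ℤ)))) = 0 := by
        rw [map_mul, ph_X_pow (lam_big (Or.inl (by push_cast; omega))), mul_zero]
      have hbot : ph m (sg (((0 : ℕ) : ℤ) - ((J + 1 : ℕ) : ℤ)) *
          (X : R) ^ (lam (((0 : ℕ) : ℤ) - ((J + 1 : ℕ) : ℤ)))) = 0 := by
        rw [map_mul, ph_X_pow (lam_big (Or.inr (by push_cast; omega))), mul_zero]
      rw [htop, hbot, add_zero, add_zero]
      rw [← ih, TT]
      refine Finset.sum_congr rfl fun k hk => ?_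
      have : ((k + 1 : ℕ) : ℤ) - ((J + 1 : ℕ) : ℤ) = (k : ℤ) - (J : ℤ) := by push_cast; ring
      rw [this]

lemma A_side {m : ℕ} (hm : 1 ≤ m) :
    ph m (schurA m) = TT m m * ph m (PowerSeries.invOfUnit (poch 1 m) 1) := by
  have h1 : ph m (schurA m) = ph m (schurA (8 * m)) := (schurA_stable hm (8 * m) (by omega)).symm
  rw [h1, schurA_eq_eP (8 * m) (8 * m) le_rfl, eP, map_sum]
  have hterm : ∀ k ∈ Finset.range (2 * (8 * m) + 1),
      ph m (F (8 * m) ((k : ℤ) - ((8 * m : ℕ) : ℤ)))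
        = ph m (sg ((k : ℤ) - ((8 * m : ℕ) : ℤ)) *
            (X : R) ^ (lam ((k : ℤ) - ((8 * m : ℕ) : ℤ)))) *
          ph m (PowerSeries.invOfUnit (poch 1 m) 1) := by
    intro k hk
    set j : ℤ := (k : ℤ) - ((8 * m : ℕ) : ℤ) with hj
    by_cases hlam : lam j < m
    · have hlg := lam_ge j
      have h' : ((lam j : ℕ) : ℤ) < (m : ℤ) := by exact_mod_cast hlam
      have hj2 : j * j < (m : ℤ) := by omega
      have hj1 : j ≤ (m : ℤ) := by nlinarith
      have hj0 : -(m : ℤ) ≤ j := by nlinarith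
      have hguard : 5 * j ≤ ((8 * m : ℕ) : ℤ) := by push_cast; omega
      rw [F_pos hguard rfl, map_mul,
        gb_quot 1 (8 * m) (idx (8 * m) j) m one_pos
          (by unfold idx; omega) (by unfold idx; omega) (by unfold idx; omega) (by omega)]
    · have hz : ph m (sg j * (X : R) ^ (lam j)) = 0 := by
        rw [map_mul, ph_X_pow (by omega), mul_zero]
      rw [hz, zero_mul]
      rcases le_or_gt (5 * j) ((8 * m : ℕ) : ℤ) with hg | hg
      · rw [F_pos hg rfl, map_mul, hz, zero_mul]
      · rw [F_neg (by omega), map_zero]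
  rw [Finset.sum_congr rfl hterm, ← Finset.sum_mul]
  have hstab := TT_stable hm (8 * m) (by omega)
  rw [← hstab, TT]

lemma theta_side {m : ℕ} (hm : 1 ≤ m) :
    TT m m = ph m ((∏ i ∈ Finset.range m, (1 - (X : R) ^ (5 * i + 3))) *
        ∏ i ∈ Finset.range m, (1 - (X : R) ^ (5 * i + 2))) * ph m (poch 5 m) := by
  have hst := congrArg (ph m) (star m hm)
  rw [map_sum] at hst
  have hterm : ∀ k ∈ Finset.range (2 * m + 1),
      ph m (sg ((m : ℤ) - k) * (X : R) ^ (lam ((m : ℤ) - k)) * gb 5 (2 * m) k)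
        = ph m (sg ((m : ℤ) - k) * (X : R) ^ (lam ((m : ℤ) - k))) *
            ph m (PowerSeries.invOfUnit (poch 5 m) 1) := by
    intro k hk
    have hk' : k ≤ 2 * m := by have := Finset.mem_range.mp hk; omega
    set t : ℤ := (m : ℤ) - k with ht
    by_cases hlam : lam t < m
    · have hlg := lam_ge t
      have h' : ((lam t : ℕ) : ℤ) < (m : ℤ) := by exact_mod_cast hlam
      have ht2 : t * t < (m : ℤ) := by omega
      have hc1 : m ≤ 5 * (k + 1) := by
        have h5 : (m : ℤ) ≤ 5 * ((k : ℤ) + 1) := by nlinarith [sq_nonneg (2 * t - 5)]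
        omega
      have hc2 : m ≤ 5 * (2 * m - k + 1) := by
        have h5 : (m : ℤ) ≤ 5 * ((2 * (m : ℤ) - k) + 1) := by nlinarith [sq_nonneg (2 * t + 5)]
        omega
      rw [map_mul, gb_quot 5 (2 * m) k m (by norm_num) hk' hc1 hc2 (by omega)]
    · have hz : ph m (sg t * (X : R) ^ (lam t)) = 0 := by
        rw [map_mul, ph_X_pow (by omega), mul_zero]
      rw [map_mul, hz, zero_mul, zero_mul]
  rw [Finset.sum_congr rfl hterm, ← Finset.sum_mul] at hst
  have hrefl : ∑ k ∈ Finset.range (2 * m + 1),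
      ph m (sg ((m : ℤ) - k) * (X : R) ^ (lam ((m : ℤ) - k))) = TT m m := by
    rw [TT, ← Finset.sum_range_reflect
      (fun k => ph m (sg ((k : ℤ) - (m : ℤ)) * (X : R) ^ (lam ((k : ℤ) - (m : ℤ))))) (2 * m + 1)]
    refine Finset.sum_congr rfl fun k hk => ?_
    have hk' : k ≤ 2 * m := by have := Finset.mem_range.mp hk; omega
    have h1 : 2 * m + 1 - 1 - k = 2 * m - k := by omega
    rw [h1]
    have h2 : ((2 * m - k : ℕ) : ℤ) - (m : ℤ) = (m : ℤ) - k := by omega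
    rw [h2]
  rw [hrefl] at hst
  have hV := pochV m 5 m (by norm_num)
  calc TT m m
      = TT m m * (ph m (poch 5 m) * ph m (PowerSeries.invOfUnit (poch 5 m) 1)) := by
        rw [hV, mul_one]
    _ = (TT m m * ph m (PowerSeries.invOfUnit (poch 5 m) 1)) * ph m (poch 5 m) := by ring
    _ = ph m ((∏ i ∈ Finset.range m, (1 - (X : R) ^ (5 * i + 3))) *
          ∏ i ∈ Finset.range m, (1 - (X : R) ^ (5 * i + 2))) * ph m (poch 5 m) := by
        rw [← hst]

lemma poch_split (q : ℕ) : poch 1 (5 * q) =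
    (∏ j ∈ Finset.range q, ((1 - (X : R) ^ (5 * j + 1)) * (1 - (X : R) ^ (5 * j + 4)))) *
      ((∏ j ∈ Finset.range q, (1 - (X : R) ^ (5 * j + 3))) *
        ∏ j ∈ Finset.range q, (1 - (X : R) ^ (5 * j + 2))) *
      poch 5 q := by
  induction q with
  | zero => simp [poch]
  | succ q ih =>
      have h5 : 5 * (q + 1) = 5 * q + 1 + 1 + 1 + 1 + 1 := by omega
      rw [h5, poch, Finset.prod_range_succ, Finset.prod_range_succ, Finset.prod_range_succ,
        Finset.prod_range_succ, Finset.prod_range_succ, ← poch, ih,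
        show poch 5 (q + 1) = poch 5 q * (1 - (X : R) ^ (5 * (q + 1))) by
          rw [poch, Finset.prod_range_succ, ← poch],
        Finset.prod_range_succ (fun j => (1 - (X : R) ^ (5 * j + 1)) * (1 - (X : R) ^ (5 * j + 4))) q,
        Finset.prod_range_succ (fun j => (1 - (X : R) ^ (5 * j + 3))) q,
        Finset.prod_range_succ (fun j => (1 - (X : R) ^ (5 * j + 2))) q]
      simp only [one_mul]
      ring

lemma Pprod_W (m : ℕ) :
    ph m (Pprod m) * ph m (∏ j ∈ Finset.range m,
      ((1 - (X : R) ^ (5 * j + 1)) * (1 - (X : R) ^ (5 * j + 4)))) = 1 := by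
  rw [← map_mul, Pprod, ← Finset.prod_mul_distrib]
  have hone : ∀ j ∈ Finset.range m,
      PowerSeries.invOfUnit ((1 - (X : R) ^ (5 * j + 1)) * (1 - (X : R) ^ (5 * j + 4))) 1 *
        ((1 - (X : R) ^ (5 * j + 1)) * (1 - (X : R) ^ (5 * j + 4))) = 1 := by
    intro j _
    rw [mul_comm]
    refine PowerSeries.mul_invOfUnit _ _ ?_
    have h1 : constantCoeff (1 - (X : R) ^ (5 * j + 1)) = 1 := by
      rw [map_sub, map_one, map_pow, constantCoeff_X, zero_pow (by omega), sub_zero]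
    have h2 : constantCoeff (1 - (X : R) ^ (5 * j + 4)) = 1 := by
      rw [map_sub, map_one, map_pow, constantCoeff_X, zero_pow (by omega), sub_zero]
    rw [map_mul, h1, h2, Units.val_one, mul_one]
  rw [Finset.prod_congr rfl hone, Finset.prod_const_one, map_one]

lemma P_side {m : ℕ} (hm : 1 ≤ m) :
    ph m (Pprod m) = ph m ((∏ i ∈ Finset.range m, (1 - (X : R) ^ (5 * i + 3))) *
        ∏ i ∈ Finset.range m, (1 - (X : R) ^ (5 * i + 2))) * ph m (poch 5 m) *
      ph m (PowerSeries.invOfUnit (poch 1 m) 1) := by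
  have hV1 := pochV m 1 m one_pos
  have hP1 : ph m (poch 1 m) = ph m (poch 1 (5 * m)) :=
    poch_eq (m := m) (b := 1) (5 * m) m (by omega) (by omega)
  calc ph m (Pprod m)
      = ph m (Pprod m) * (ph m (poch 1 m) * ph m (PowerSeries.invOfUnit (poch 1 m) 1)) := by
        rw [hV1, mul_one]
    _ = (ph m (Pprod m) * ph m (poch 1 (5 * m))) *
          ph m (PowerSeries.invOfUnit (poch 1 m) 1) := by rw [← hP1]; ring
    _ = ((ph m (Pprod m) * ph m (∏ j ∈ Finset.range m,
            ((1 - (X : R) ^ (5 * j + 1)) * (1 - (X : R) ^ (5 * j + 4))))) *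
          (ph m ((∏ i ∈ Finset.range m, (1 - (X : R) ^ (5 * i + 3))) *
            ∏ i ∈ Finset.range m, (1 - (X : R) ^ (5 * i + 2))) * ph m (poch 5 m))) *
          ph m (PowerSeries.invOfUnit (poch 1 m) 1) := by
        rw [poch_split m, map_mul, map_mul]
        ring
    _ = ph m ((∏ i ∈ Finset.range m, (1 - (X : R) ^ (5 * i + 3))) *
          ∏ i ∈ Finset.range m, (1 - (X : R) ^ (5 * i + 2))) * ph m (poch 5 m) *
        ph m (PowerSeries.invOfUnit (poch 1 m) 1) := by
        rw [Pprod_W m, one_mul]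

lemma quot_main {m : ℕ} (hm : 1 ≤ m) : ph m (schurA m) = ph m (Pprod m) := by
  rw [A_side hm, theta_side hm, P_side hm]

end RR

/-- `A_m` agrees with `P_m` through degree `m−1`:  `A_m − P_m ∈ q^m ℤ⟦q⟧`. -/
theorem schurA_agrees_with_Pprod (m : ℕ) :
    (PowerSeries.X : PowerSeries ℤ) ^ m ∣ schurA m - Pprod m := by
  rcases Nat.eq_zero_or_pos m with rfl | hm
  · simpa using one_dvd _
  · have h := RR.quot_main hm
    simp only [RR.ph] at h
    have h2 : schurA m - Pprod m ∈ RR.Imod m := Ideal.Quotient.eq.mp h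
    rwa [RR.Imod, Ideal.mem_span_singleton] at h2
end
end

section
/- For every m ≥ 0, the Schur polynomial B_m agrees with the finite product Q_m through degree m−1: in the formal power series ring ℤ⟦q⟧ one has B_m(q) − Q_m(q) ∈ q^m·ℤ⟦q⟧. -/
noncomputable section

open PowerSeries

/-- The Schur polynomial `B_m(q) = Σ_{n≥0} q^{n(n+1)} [m−n choose n]_q`. -/
def schurB (m : ℕ) : PowerSeries ℤ :=
  ∑ n ∈ Finset.range (m + 1),
    (PowerSeries.X : PowerSeries ℤ) ^ (n * (n + 1)) * qBinom (m - n) n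

/-- `Q_m(q) = ∏_{j=1}^m 1/((1 − q^{5j−3})(1 − q^{5j−2})) ∈ ℤ⟦q⟧` (with the product
reindexed by `j ↦ j+1`, i.e. exponents `5j+2` and `5j+3` for `0 ≤ j < m`); each factor
has constant term `1` and is inverted via `PowerSeries.invOfUnit`. -/
def Qprod (m : ℕ) : PowerSeries ℤ :=
  ∏ j ∈ Finset.range m,
    PowerSeries.invOfUnit
      ((1 - (PowerSeries.X : PowerSeries ℤ) ^ (5 * j + 2)) *
        (1 - (PowerSeries.X : PowerSeries ℤ) ^ (5 * j + 3))) 1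

namespace RRaux

abbrev R := PowerSeries ℤ

/-- generalized pochhammer with base exponent `b`: `∏_{j<n} (1 - X^(b(j+1)))` -/
def pB (b n : ℕ) : R := ∏ j ∈ Finset.range n, (1 - (X : R) ^ (b*(j+1)))

def iv (f : R) : R := PowerSeries.invOfUnit f 1

lemma cc_pB {b : ℕ} (hb : 0 < b) (n : ℕ) : constantCoeff (pB b n) = 1 := by
  have h : ∀ x ∈ Finset.range n, constantCoeff (1 - (X : R) ^ (b*(x+1))) = 1 := by
    intro x _
    rw [map_sub, map_one, map_pow, constantCoeff_X, zero_pow (by positivity), sub_zero]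
  rw [pB, map_prod, Finset.prod_congr rfl h, Finset.prod_const_one]

lemma pB_ne_zero {b : ℕ} (hb : 0 < b) (n : ℕ) : pB b n ≠ 0 := by
  intro h
  have h2 := cc_pB hb n
  rw [h, map_zero] at h2
  norm_num at h2

lemma mul_iv {f : R} (h : constantCoeff f = 1) : f * iv f = 1 :=
  f.mul_invOfUnit 1 (by simpa using h)

lemma f_ne_zero {f : R} (h : constantCoeff f = 1) : f ≠ 0 := by
  intro hf; rw [hf, map_zero] at h; exact one_ne_zero h.symm

lemma eq_iv {f g : R} (h : constantCoeff f = 1) (hg : f * g = 1) : g = iv f := by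
  have h2 := mul_iv h
  exact mul_left_cancel₀ (f_ne_zero h) (by rw [hg, h2])

lemma pB_succ (b n : ℕ) : pB b (n+1) = pB b n * (1 - (X:R)^(b*(n+1))) := by
  simp [pB, Finset.prod_range_succ]

lemma cc_mul_pB {b : ℕ} (hb : 0 < b) (n k : ℕ) : constantCoeff (pB b n * pB b k) = 1 := by
  rw [map_mul, cc_pB hb, cc_pB hb, one_mul]

/-- Gaussian binomial, base b -/
def gB (b r n : ℕ) : R := if n ≤ r then pB b r * iv (pB b n * pB b (r-n)) else 0

lemma gB_of_le {b r n : ℕ} (h : n ≤ r) : gB b r n = pB b r * iv (pB b n * pB b (r-n)) :=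
  if_pos h

lemma gB_zero {b r n : ℕ} (h : r < n) : gB b r n = 0 := if_neg (by omega)

lemma gB_mul_poch {b : ℕ} (hb : 0 < b) {r n : ℕ} (h : n ≤ r) :
    gB b r n * (pB b n * pB b (r-n)) = pB b r := by
  rw [gB_of_le h, mul_assoc, mul_comm (iv _), mul_iv (cc_mul_pB hb n (r-n)), mul_one]

lemma pB_zero (b : ℕ) : pB b 0 = 1 := by simp [pB]

lemma iv_one : iv (1 : R) = 1 := (eq_iv (by simp) (by simp)).symm

lemma gB_n_zero {b : ℕ} (hb : 0 < b) (r : ℕ) : gB b r 0 = 1 := by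
  have h : gB b r 0 * (pB b 0 * pB b (r-0)) = pB b r := gB_mul_poch hb (Nat.zero_le r)
  rw [pB_zero, one_mul, Nat.sub_zero] at h
  exact mul_right_cancel₀ (pB_ne_zero hb r) (by rw [h, one_mul])

lemma gB_self {b : ℕ} (hb : 0 < b) (r : ℕ) : gB b r r = 1 := by
  have h : gB b r r * (pB b r * pB b (r-r)) = pB b r := gB_mul_poch hb le_rfl
  rw [Nat.sub_self, pB_zero, mul_one] at h
  exact mul_right_cancel₀ (pB_ne_zero hb r) (by rw [h, one_mul])



lemma pB_mul_ne_zero {b : ℕ} (hb : 0 < b) (n k : ℕ) : pB b n * pB b k ≠ 0 :=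
  mul_ne_zero (pB_ne_zero hb n) (pB_ne_zero hb k)

/-- Pascal 1: `[r+1; k] = [r; k-1] + X^(bk) [r; k]`, valid for all `k ≥ 1`. -/
lemma pascal1 {b : ℕ} (hb : 0 < b) (r k : ℕ) (hk : 1 ≤ k) :
    gB b (r+1) k = gB b r (k-1) + (X:R)^(b*k) * gB b r k := by
  rcases lt_trichotomy k (r+1) with h | h | h
  · -- 1 ≤ k ≤ r
    have hkr : k ≤ r := by omega
    apply mul_right_cancel₀ (pB_mul_ne_zero hb k (r+1-k))
    rw [add_mul, gB_mul_poch hb (by omega : k ≤ r+1)]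
    have e1 : pB b k = pB b (k-1) * (1 - (X:R)^(b*k)) := by
      have := pB_succ b (k-1)
      rw [show k-1+1 = k from by omega] at this
      exact this
    have e2 : pB b (r+1-k) = pB b (r-k) * (1 - (X:R)^(b*(r+1-k))) := by
      have := pB_succ b (r-k)
      rw [show r-k+1 = r+1-k from by omega] at this
      exact this
    have h1 : gB b r (k-1) * (pB b k * pB b (r+1-k)) = pB b r * (1 - (X:R)^(b*k)) := by
      calc gB b r (k-1) * (pB b k * pB b (r+1-k))
          = gB b r (k-1) * (pB b (k-1) * pB b (r-(k-1))) * (1 - (X:R)^(b*k)) := by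
            rw [e1, show r - (k-1) = r+1-k from by omega]; ring
        _ = pB b r * (1 - (X:R)^(b*k)) := by rw [gB_mul_poch hb (by omega)]
    have h2 : (X:R)^(b*k) * gB b r k * (pB b k * pB b (r+1-k))
        = (X:R)^(b*k) * (pB b r * (1 - (X:R)^(b*(r+1-k)))) := by
      calc (X:R)^(b*k) * gB b r k * (pB b k * pB b (r+1-k))
          = (X:R)^(b*k) * (gB b r k * (pB b k * pB b (r-k))) * (1 - (X:R)^(b*(r+1-k))) := by
            rw [e2]; ring
        _ = (X:R)^(b*k) * (pB b r * (1 - (X:R)^(b*(r+1-k)))) := by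
            rw [gB_mul_poch hb hkr]; ring
    rw [h1, h2, pB_succ b r]
    symm
    have e3 : (X:R)^(b*k) * (X:R)^(b*(r+1-k)) = (X:R)^(b*(r+1)) := by
      rw [← pow_add]
      congr 1
      have : k + (r+1-k) = r+1 := by omega
      calc b*k + b*(r+1-k) = b*(k + (r+1-k)) := by ring
        _ = b*(r+1) := by rw [this]
    calc pB b r * (1 - (X:R)^(b*k)) + (X:R)^(b*k) * (pB b r * (1 - (X:R)^(b*(r+1-k))))
        = pB b r * (1 - (X:R)^(b*k) * (X:R)^(b*(r+1-k))) := by ring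
      _ = pB b r * (1 - (X:R)^(b*(r+1))) := by rw [e3]
  · -- k = r+1
    subst h
    rw [gB_self hb, gB_zero (by omega : r < r+1), show r+1-1 = r from rfl, gB_self hb,
      mul_zero, add_zero]
  · -- k > r+1
    rw [gB_zero (by omega : r+1 < k), gB_zero (by omega : r < k-1),
      gB_zero (by omega : r < k), mul_zero, add_zero]

/-- Pascal 2: `[r+1; k] = [r; k] + X^(b(r+1-k)) [r; k-1]`, valid for all `k ≥ 1`. -/
lemma pascal2 {b : ℕ} (hb : 0 < b) (r k : ℕ) (hk : 1 ≤ k) :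
    gB b (r+1) k = gB b r k + (X:R)^(b*(r+1-k)) * gB b r (k-1) := by
  rcases lt_trichotomy k (r+1) with h | h | h
  · have hkr : k ≤ r := by omega
    apply mul_right_cancel₀ (pB_mul_ne_zero hb k (r+1-k))
    rw [add_mul, gB_mul_poch hb (by omega : k ≤ r+1)]
    have e1 : pB b k = pB b (k-1) * (1 - (X:R)^(b*k)) := by
      have := pB_succ b (k-1); rw [show k-1+1 = k from by omega] at this; exact this
    have e2 : pB b (r+1-k) = pB b (r-k) * (1 - (X:R)^(b*(r+1-k))) := by
      have := pB_succ b (r-k); rw [show r-k+1 = r+1-k from by omega] at this; exact this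
    have h1 : gB b r k * (pB b k * pB b (r+1-k)) = pB b r * (1 - (X:R)^(b*(r+1-k))) := by
      calc gB b r k * (pB b k * pB b (r+1-k))
          = gB b r k * (pB b k * pB b (r-k)) * (1 - (X:R)^(b*(r+1-k))) := by rw [e2]; ring
        _ = pB b r * (1 - (X:R)^(b*(r+1-k))) := by rw [gB_mul_poch hb hkr]
    have h2 : (X:R)^(b*(r+1-k)) * gB b r (k-1) * (pB b k * pB b (r+1-k))
        = (X:R)^(b*(r+1-k)) * (pB b r * (1 - (X:R)^(b*k))) := by
      calc (X:R)^(b*(r+1-k)) * gB b r (k-1) * (pB b k * pB b (r+1-k))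
          = (X:R)^(b*(r+1-k)) * (gB b r (k-1) * (pB b (k-1) * pB b (r-(k-1)))) *
              (1 - (X:R)^(b*k)) := by
            rw [e1, show r - (k-1) = r+1-k from by omega]; ring
        _ = (X:R)^(b*(r+1-k)) * (pB b r * (1 - (X:R)^(b*k))) := by
            rw [gB_mul_poch hb (by omega)]; ring
    rw [h1, h2, pB_succ b r]
    symm
    have e3 : (X:R)^(b*(r+1-k)) * (X:R)^(b*k) = (X:R)^(b*(r+1)) := by
      rw [← pow_add]
      congr 1
      have : (r+1-k) + k = r+1 := by omega
      calc b*(r+1-k) + b*k = b*((r+1-k) + k) := by ring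
        _ = b*(r+1) := by rw [this]
    calc pB b r * (1 - (X:R)^(b*(r+1-k))) + (X:R)^(b*(r+1-k)) * (pB b r * (1 - (X:R)^(b*k)))
        = pB b r * (1 - (X:R)^(b*(r+1-k)) * (X:R)^(b*k)) := by ring
      _ = pB b r * (1 - (X:R)^(b*(r+1))) := by rw [e3]
  · subst h
    rw [gB_self hb, gB_zero (by omega : r < r+1), show r+1-1 = r from rfl, gB_self hb]
    norm_num
  · rw [gB_zero (by omega : r+1 < k), gB_zero (by omega : r < k),
      gB_zero (by omega : r < k-1)]
    norm_num

/-- Gaussian binomial with integer lower index (zero when negative). -/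
def gZ (b r : ℕ) (k : ℤ) : R := if 0 ≤ k then gB b r k.toNat else 0

lemma gZ_neg {b r : ℕ} {k : ℤ} (h : k < 0) : gZ b r k = 0 := if_neg (by omega)

lemma gZ_of_nonneg {b r : ℕ} {k : ℤ} (h : 0 ≤ k) : gZ b r k = gB b r k.toNat := if_pos h

lemma gZ_big {b r : ℕ} {k : ℤ} (h : (r:ℤ) < k) : gZ b r k = 0 := by
  rcases le_or_gt 0 k with h0 | h0
  · rw [gZ_of_nonneg h0, gB_zero (by omega)]
  · exact gZ_neg h0

lemma pascal1Z {b : ℕ} (hb : 0 < b) (r : ℕ) (k : ℤ) (hk : 0 ≤ k) :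
    gZ b (r+1) k = gZ b r (k-1) + (X:R)^(b*k.toNat) * gZ b r k := by
  rcases eq_or_lt_of_le hk with h | h
  · rw [← h]
    simp only [gZ_of_nonneg le_rfl, gZ_neg (by norm_num : (0:ℤ)-1 < 0), Int.toNat_zero,
      gB_n_zero hb, mul_zero, pow_zero, mul_one, zero_add, mul_one]
  · have h1 : (1:ℤ) ≤ k := h
    rw [gZ_of_nonneg hk, gZ_of_nonneg (by omega : (0:ℤ) ≤ k - 1), gZ_of_nonneg hk,
      show (k-1).toNat = k.toNat - 1 from by omega]
    exact pascal1 hb r k.toNat (by omega)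

lemma pascal2Z {b : ℕ} (hb : 0 < b) (r : ℕ) (k : ℤ) (hk : 0 ≤ k) (hk2 : k ≤ (r:ℤ)+1) :
    gZ b (r+1) k = gZ b r k + (X:R)^(b*(r+1-k.toNat)) * gZ b r (k-1) := by
  rcases eq_or_lt_of_le hk with h | h
  · rw [← h]
    simp only [gZ_of_nonneg le_rfl, gZ_neg (by norm_num : (0:ℤ)-1 < 0), Int.toNat_zero,
      gB_n_zero hb, mul_zero, add_zero]
  · rw [gZ_of_nonneg hk, gZ_of_nonneg (by omega : (0:ℤ) ≤ k - 1), gZ_of_nonneg hk,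
      show (k-1).toNat = k.toNat - 1 from by omega]
    exact pascal2 hb r k.toNat (by omega)


/-! ### Truncation lemmas -/

lemma dvd_prod_sub_one {a : ℕ} {s : Finset ℕ} {f : ℕ → R}
    (h : ∀ i ∈ s, (X:R)^a ∣ f i - 1) : (X:R)^a ∣ (∏ i ∈ s, f i) - 1 := by
  induction s using Finset.induction_on with
  | empty => simp
  | @insert j s hj ih =>
      rw [Finset.prod_insert hj]
      have h1 : (X:R)^a ∣ f j - 1 := h j (Finset.mem_insert_self j s)
      have h2 : (X:R)^a ∣ (∏ i ∈ s, f i) - 1 := ih fun i hi => h i (Finset.mem_insert_of_mem hi)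
      have : f j * (∏ i ∈ s, f i) - 1
          = f j * ((∏ i ∈ s, f i) - 1) + (f j - 1) := by ring
      rw [this]
      exact dvd_add (Dvd.dvd.mul_left h2 _) h1

lemma pB_sub {b : ℕ} {n m : ℕ} (h : n ≤ m) :
    (X:R)^(b*(n+1)) ∣ pB b m - pB b n := by
  obtain ⟨t, rfl⟩ : ∃ t, m = n + t := ⟨m - n, by omega⟩
  rw [pB, Finset.prod_range_add, ← pB]
  have : pB b n * (∏ i ∈ Finset.range t, (1 - (X:R)^(b*(n+i+1)))) - pB b n
      = pB b n * ((∏ i ∈ Finset.range t, (1 - (X:R)^(b*(n+i+1)))) - 1) := by ring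
  rw [this]
  apply Dvd.dvd.mul_left
  apply dvd_prod_sub_one
  intro i _
  have : 1 - (1 - (X:R)^(b*(n+i+1))) = (X:R)^(b*(n+i+1)) := by ring
  rw [show (1:R) - (X:R)^(b*(n+i+1)) - 1 = -((X:R)^(b*(n+i+1))) from by ring]
  exact (pow_dvd_pow (X:R) (by nlinarith : b*(n+1) ≤ b*(n+i+1))).neg_right

lemma iv_sub {b : ℕ} (hb : 0 < b) {n m : ℕ} (h : n ≤ m) :
    (X:R)^(b*(n+1)) ∣ iv (pB b n) - iv (pB b m) := by
  have key : iv (pB b n) - iv (pB b m) = iv (pB b n) * iv (pB b m) * (pB b m - pB b n) := by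
    have h1 := mul_iv (cc_pB hb n)
    have h2 := mul_iv (cc_pB hb m)
    have e : iv (pB b n) * iv (pB b m) * (pB b m - pB b n)
        = iv (pB b n) * (pB b m * iv (pB b m)) - (pB b n * iv (pB b n)) * iv (pB b m) := by
      ring
    rw [e, h1, h2, mul_one, one_mul]
  rw [key]
  exact Dvd.dvd.mul_left (pB_sub h) _

lemma gB_eq_prod_mul_iv {b : ℕ} (hb : 0 < b) {r k : ℕ} (hk : k ≤ r) :
    gB b r k = (∏ i ∈ Finset.Ico (r-k) r, (1 - (X:R)^(b*(i+1)))) * iv (pB b k) := by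
  apply mul_right_cancel₀ (pB_mul_ne_zero hb k (r-k))
  rw [gB_mul_poch hb hk]
  have : (∏ i ∈ Finset.Ico (r-k) r, (1 - (X:R)^(b*(i+1)))) * iv (pB b k) *
      (pB b k * pB b (r-k))
      = (pB b (r-k) * ∏ i ∈ Finset.Ico (r-k) r, (1 - (X:R)^(b*(i+1)))) *
        (pB b k * iv (pB b k)) := by ring
  rw [this, mul_iv (cc_pB hb k), mul_one, pB, pB,
    Finset.prod_range_mul_prod_Ico _ (by omega : r - k ≤ r)]

lemma gB_sub_iv {b : ℕ} (hb : 0 < b) {r k : ℕ} (hk : k ≤ r) :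
    (X:R)^(b*(r-k+1)) ∣ gB b r k - iv (pB b k) := by
  rw [gB_eq_prod_mul_iv hb hk]
  have : (∏ i ∈ Finset.Ico (r-k) r, (1 - (X:R)^(b*(i+1)))) * iv (pB b k) - iv (pB b k)
      = ((∏ i ∈ Finset.Ico (r-k) r, (1 - (X:R)^(b*(i+1)))) - 1) * iv (pB b k) := by ring
  rw [this]
  apply Dvd.dvd.mul_right
  apply dvd_prod_sub_one
  intro i hi
  rw [Finset.mem_Ico] at hi
  rw [show (1:R) - (X:R)^(b*(i+1)) - 1 = -((X:R)^(b*(i+1))) from by ring]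
  exact (pow_dvd_pow (X:R) (by nlinarith [hi.1] : b*(r-k+1) ≤ b*(i+1))).neg_right

/-- main truncation for the binomial against a long inverse Pochhammer -/
lemma trunc_gB_iv {b : ℕ} (hb : 0 < b) {r k K d : ℕ} (hk : k ≤ r) (hK : k ≤ K)
    (h1 : d ≤ b*(r-k+1)) (h2 : d ≤ b*(k+1)) :
    (X:R)^d ∣ gB b r k - iv (pB b K) := by
  have : gB b r k - iv (pB b K) = (gB b r k - iv (pB b k)) + (iv (pB b k) - iv (pB b K)) := by
    ring
  rw [this]
  exact dvd_add ((pow_dvd_pow (X:R) h1).trans (gB_sub_iv hb hk))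
    ((pow_dvd_pow (X:R) h2).trans (iv_sub hb hK))

/-- truncation of `pochhammer * binomial - 1` -/
lemma trunc_pB_gB {b : ℕ} (hb : 0 < b) {r k n d : ℕ} (hk : k ≤ r)
    (h1 : d ≤ b*(r-k+1)) (h2 : d ≤ b*(k+1)) (h3 : d ≤ b*(n+1)) :
    (X:R)^d ∣ pB b n * gB b r k - 1 := by
  have key : pB b n * gB b r k - 1
      = pB b n * (gB b r k - iv (pB b k)) + iv (pB b k) * (pB b n - pB b k)
        + (pB b k * iv (pB b k) - 1) := by ring
  rw [key, mul_iv (cc_pB hb k), sub_self, add_zero]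
  apply dvd_add
  · exact Dvd.dvd.mul_left ((pow_dvd_pow (X:R) h1).trans (gB_sub_iv hb hk)) _
  · apply Dvd.dvd.mul_left
    rcases le_or_gt n k with h | h
    · have := pB_sub (b := b) h
      have hd : (X:R)^d ∣ pB b k - pB b n := (pow_dvd_pow (X:R) h3).trans this
      simpa using hd.neg_right
    · exact (pow_dvd_pow (X:R) h2).trans (pB_sub h.le)


/-! ### signs and exponents -/

def sg (j : ℤ) : R := PowerSeries.C ((-1)^j.natAbs)

lemma sg_zero : sg 0 = 1 := by simp [sg]

lemma sg_succ (j : ℤ) : sg (j+1) = - sg j := by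
  unfold sg
  rcases Int.even_or_odd j with h | h
  · have h1 : (-1 : ℤ)^j.natAbs = 1 := Even.neg_one_pow (by simpa [Int.natAbs_even] using h)
    have h2 : (-1 : ℤ)^(j+1).natAbs = -1 := Odd.neg_one_pow (by
      rw [Int.natAbs_odd]; exact Even.add_one h)
    rw [h1, h2]; simp
  · have h1 : (-1 : ℤ)^j.natAbs = -1 := Odd.neg_one_pow (by simpa [Int.natAbs_odd] using h)
    have h2 : (-1 : ℤ)^(j+1).natAbs = 1 := Even.neg_one_pow (by
      rw [Int.natAbs_even]; exact h.add_one)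
    rw [h1, h2]; simp

lemma sg_neg (j : ℤ) : sg (-j) = sg j := by simp [sg]

def ee (j : ℤ) : ℕ := ((5*j*j + 3*j)/2).toNat

lemma ee_nonneg (j : ℤ) : 0 ≤ 5*j*j + 3*j := by
  rcases le_or_gt 0 j with h | h
  · nlinarith
  · nlinarith [mul_nonneg (by linarith : (0:ℤ) ≤ -j) (by linarith : (0:ℤ) ≤ -(5*j+3))]

lemma ee_even (j : ℤ) : ∃ t, 5*j*j + 3*j = t + t := by
  rcases Int.even_or_odd j with ⟨t, ht⟩ | ⟨t, ht⟩
  · exact ⟨10*t*t + 3*t, by subst ht; ring⟩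
  · exact ⟨10*t*t + 13*t + 4, by subst ht; ring⟩

lemma ee_two (j : ℤ) : 2*((ee j : ℕ) : ℤ) = 5*j*j + 3*j := by
  have h1 := ee_nonneg j
  obtain ⟨t, ht⟩ := ee_even j
  unfold ee
  set K := 5*j*j + 3*j with hK
  omega

lemma ee_succ (j : ℤ) : ((ee (j+1) : ℕ) : ℤ) = (ee j : ℤ) + 5*j + 4 := by
  have h1 := ee_two j
  have h2 := ee_two (j+1)
  have h3 : 5*(j+1)*(j+1) + 3*(j+1) = 5*j*j + 3*j + (10*j + 8) := by ring
  rw [h3] at h2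
  omega

lemma ee_ge (j : ℤ) : (j.natAbs : ℤ) ≤ (ee j : ℤ) := by
  have h1 := ee_two j
  have habs : (j.natAbs : ℤ) = |j| := Int.abs_eq_natAbs j |>.symm
  rcases abs_cases j with ⟨h2, h3⟩ | ⟨h2, h3⟩
  · have : 2*|j| ≤ 5*j*j + 3*j := by rw [h2]; nlinarith
    omega
  · have : 2*|j| ≤ 5*j*j + 3*j := by
      rw [h2]
      nlinarith [mul_nonneg (by linarith : (0:ℤ) ≤ -j) (by linarith : (0:ℤ) ≤ -(j+1))]
    omega

def ff (j : ℤ) : ℕ := ee (-j)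

lemma ff_succ (j : ℤ) : ((ff (j+1) : ℕ) : ℤ) = (ff j : ℤ) + 5*j + 1 := by
  unfold ff
  have h1 := ee_two (-j)
  have h2 := ee_two (-(j+1))
  have h3 : 5*(-(j+1))*(-(j+1)) + 3*(-(j+1)) = 5*(-j)*(-j) + 3*(-j) + (10*j + 2) := by ring
  rw [h3] at h2
  omega

lemma ff_ge (j : ℤ) : (j.natAbs : ℤ) ≤ (ff j : ℤ) := by
  have := ee_ge (-j)
  simpa [ff, Int.natAbs_neg] using this

/-! ### the Schur alternating sum -/

def dT (m : ℕ) (j : ℤ) : R := sg j * (X:R)^(ee j) * gZ 1 (m+1) (((m:ℤ) - 5*j)/2)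

def DD (m : ℕ) : R := ∑ j ∈ Finset.Icc (-(m:ℤ)-4) ((m:ℤ)+4), dT m j

lemma dT_eq_zero {m : ℕ} {j : ℤ} (h : (m:ℤ)+4 < 5*|j|) : dT m j = 0 := by
  unfold dT
  rcases abs_cases j with ⟨h1, h2⟩ | ⟨h1, h2⟩
  · rw [gZ_neg (by omega : ((m:ℤ) - 5*j)/2 < 0), mul_zero]
  · rw [gZ_big (by omega : ((m:ℤ)+1 : ℤ) < ((m:ℤ) - 5*j)/2), mul_zero]

lemma DD_eq_sum {m : ℕ} {a b : ℤ} (ha : a ≤ -(m:ℤ)-4) (hb : (m:ℤ)+4 ≤ b) :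
    ∑ j ∈ Finset.Icc a b, dT m j = DD m := by
  rw [DD]
  apply (Finset.sum_subset (Finset.Icc_subset_Icc ha hb) _).symm
  intro j hj hj2
  rw [Finset.mem_Icc] at hj hj2
  apply dT_eq_zero
  rcases abs_cases j with ⟨h1, h2⟩ | ⟨h1, h2⟩ <;> omega


/-! ### recurrence for DD -/

def lE (m : ℕ) (j : ℤ) : R :=
  sg j * (X:R)^(ee j + (((m:ℤ)+2-5*j)/2).toNat) * gZ 1 (m+1) (((m:ℤ)+2-5*j)/2)

def lO (m : ℕ) (j : ℤ) : R :=
  sg j * (X:R)^(ee j + ((m:ℤ)+3 - ((m:ℤ)+2-5*j)/2).toNat) * gZ 1 (m+1) (((m:ℤ)+2-5*j)/2 - 2)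

def EE (m : ℕ) (j : ℤ) : R := if ((m:ℤ)+2-5*j) % 2 = 0 then lE m j else 0

def OO (m : ℕ) (j : ℤ) : R := if ((m:ℤ)+2-5*j) % 2 = 0 then 0 else lO m j

lemma key1 (m : ℕ) (j : ℤ) :
    dT (m+2) j = dT (m+1) j + (X:R)^(m+2) * dT m j + (EE m j + OO m j) := by
  have hb : 0 < 1 := Nat.one_pos
  obtain ⟨d, hd⟩ : ∃ d : ℤ, d = (m:ℤ)+2-5*j := ⟨_, rfl⟩
  obtain ⟨k, hk⟩ : ∃ k : ℤ, k = d/2 := ⟨_, rfl⟩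
  have hm2 : dT (m+2) j = sg j * (X:R)^(ee j) * gZ 1 (m+3) k := by
    unfold dT
    rw [show ((((m+2:ℕ)):ℤ) - 5*j)/2 = k from by push_cast; omega,
      show m+2+1 = m+3 from rfl]
  have hm1 : dT (m+1) j = sg j * (X:R)^(ee j) * gZ 1 (m+2) ((d-1)/2) := by
    unfold dT
    rw [show ((((m+1:ℕ)):ℤ) - 5*j)/2 = (d-1)/2 from by push_cast; omega,
      show m+1+1 = m+2 from rfl]
  have hm0 : dT m j = sg j * (X:R)^(ee j) * gZ 1 (m+1) (k-1) := by
    unfold dT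
    rw [show (((m:ℕ):ℤ) - 5*j)/2 = k-1 from by omega]
  have hEExp : EE m j = if d % 2 = 0 then
      sg j * (X:R)^(ee j + k.toNat) * gZ 1 (m+1) k else 0 := by
    unfold EE lE; rw [← hd, ← hk]
  have hOOxp : OO m j = if d % 2 = 0 then 0 else
      sg j * (X:R)^(ee j + ((m:ℤ)+3 - k).toNat) * gZ 1 (m+1) (k - 2) := by
    unfold OO lO; rw [← hd, ← hk]
  rcases lt_or_ge d 0 with hneg | hpos
  · -- d < 0 : everything is zero
    rw [hm2, hm1, hm0, hEExp, hOOxp, gZ_neg (by omega : k < 0),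
      gZ_neg (by omega : (d-1)/2 < 0), gZ_neg (by omega : k - 1 < 0),
      gZ_neg (by omega : k < 0), gZ_neg (by omega : k - 2 < 0)]
    split <;> simp
  rcases Int.emod_two_eq_zero_or_one d with hpar | hpar
  · -- d even, d = 2k
    have hstep1 : gZ 1 (m+3) k = gZ 1 (m+2) (k-1) + (X:R)^(1*k.toNat) * gZ 1 (m+2) k :=
      pascal1Z hb (m+2) k (by omega)
    have hEE : EE m j = sg j * (X:R)^(ee j + k.toNat) * gZ 1 (m+1) k := by
      rw [hEExp, if_pos hpar]
    have hOO : OO m j = 0 := by rw [hOOxp, if_pos hpar]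
    rcases le_or_gt k ((m:ℤ)+2) with hks | hks
    · -- main even case
      have hstep2 : gZ 1 (m+2) k = gZ 1 (m+1) k + (X:R)^(1*(m+1+1-k.toNat)) * gZ 1 (m+1) (k-1) :=
        pascal2Z hb (m+1) k (by omega) (by push_cast; omega)
      rw [hm2, hm1, hm0, hstep1, hstep2, hEE, hOO,
        show ((d-1)/2 : ℤ) = k - 1 from by omega]
      have e1 : (X:R)^(ee j) * (X:R)^(1*k.toNat) = (X:R)^(ee j + k.toNat) := by
        rw [← pow_add]; congr 1; omega
      have e2 : (X:R)^(ee j) * ((X:R)^(1*k.toNat) * (X:R)^(1*(m+1+1-k.toNat)))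
          = (X:R)^(m+2) * (X:R)^(ee j) := by
        rw [← pow_add, ← pow_add, ← pow_add]; congr 1; omega
      calc sg j * (X:R)^(ee j) *
            (gZ 1 (m+2) (k-1) + (X:R)^(1*k.toNat) *
              (gZ 1 (m+1) k + (X:R)^(1*(m+1+1-k.toNat)) * gZ 1 (m+1) (k-1)))
          = sg j * (X:R)^(ee j) * gZ 1 (m+2) (k-1)
            + sg j * ((X:R)^(ee j) * (X:R)^(1*k.toNat)) * gZ 1 (m+1) k
            + sg j * ((X:R)^(ee j) * ((X:R)^(1*k.toNat) * (X:R)^(1*(m+1+1-k.toNat))))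
              * gZ 1 (m+1) (k-1) := by ring
        _ = sg j * (X:R)^(ee j) * gZ 1 (m+2) (k-1)
            + (X:R)^(m+2) * (sg j * (X:R)^(ee j) * gZ 1 (m+1) (k-1))
            + (sg j * (X:R)^(ee j + k.toNat) * gZ 1 (m+1) k + 0) := by
              rw [e1, e2]; ring
    · -- k ≥ m+3 : degenerate
      have hz1 : gZ 1 (m+2) k = 0 := gZ_big (by push_cast; omega)
      have hz2 : gZ 1 (m+1) (k-1) = 0 := gZ_big (by push_cast; omega)
      have hz3 : gZ 1 (m+1) k = 0 := gZ_big (by push_cast; omega)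
      rw [hm2, hm1, hm0, hstep1, hEE, hOO,
        show ((d-1)/2 : ℤ) = k - 1 from by omega, hz1, hz2, hz3]
      ring
  · -- d odd, d = 2k+1
    have hEE : EE m j = 0 := by rw [hEExp, if_neg (by omega)]
    have hOO : OO m j = sg j * (X:R)^(ee j + ((m:ℤ)+3 - k).toNat) * gZ 1 (m+1) (k - 2) := by
      rw [hOOxp, if_neg (by omega)]
    have hdm1 : ((d-1)/2 : ℤ) = k := by omega
    rcases le_or_gt k ((m:ℤ)+3) with hks | hks
    · have hstep1 : gZ 1 (m+3) k = gZ 1 (m+2) k + (X:R)^(1*(m+2+1-k.toNat)) * gZ 1 (m+2) (k-1) :=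
        pascal2Z hb (m+2) k (by omega) (by push_cast; omega)
      rcases eq_or_lt_of_le (show (0:ℤ) ≤ k from by omega) with hk0 | hk0
      · -- k = 0
        rw [hm2, hm1, hm0, hstep1, hEE, hOO, hdm1,
          gZ_neg (r := m+2) (by omega : k - 1 < 0), gZ_neg (r := m+1) (by omega : k - 1 < 0),
          gZ_neg (r := m+1) (by omega : k - 2 < 0)]
        simp
      · -- k ≥ 1
        have hstep2 : gZ 1 (m+2) (k-1)
            = gZ 1 (m+1) (k-1-1) + (X:R)^(1*(k-1).toNat) * gZ 1 (m+1) (k-1) :=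
          pascal1Z hb (m+1) (k-1) (by omega)
        rw [hm2, hm1, hm0, hstep1, hstep2, hEE, hOO, hdm1,
          show (k-1-1 : ℤ) = k - 2 from by omega]
        have e1 : (X:R)^(ee j) * ((X:R)^(1*(m+2+1-k.toNat)) * (X:R)^(1*(k-1).toNat))
            = (X:R)^(m+2) * (X:R)^(ee j) := by
          rw [← pow_add, ← pow_add, ← pow_add]; congr 1; omega
        have e2 : (X:R)^(ee j) * (X:R)^(1*(m+2+1-k.toNat))
            = (X:R)^(ee j + ((m:ℤ)+3 - k).toNat) := by
          rw [← pow_add]; congr 1; omega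
        calc sg j * (X:R)^(ee j) *
              (gZ 1 (m+2) k + (X:R)^(1*(m+2+1-k.toNat)) *
                (gZ 1 (m+1) (k-2) + (X:R)^(1*(k-1).toNat) * gZ 1 (m+1) (k-1)))
            = sg j * (X:R)^(ee j) * gZ 1 (m+2) k
              + sg j * ((X:R)^(ee j) * ((X:R)^(1*(m+2+1-k.toNat)) * (X:R)^(1*(k-1).toNat)))
                * gZ 1 (m+1) (k-1)
              + sg j * ((X:R)^(ee j) * (X:R)^(1*(m+2+1-k.toNat))) * gZ 1 (m+1) (k-2) := by
                ring
          _ = sg j * (X:R)^(ee j) * gZ 1 (m+2) k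
              + (X:R)^(m+2) * (sg j * (X:R)^(ee j) * gZ 1 (m+1) (k-1))
              + (0 + sg j * (X:R)^(ee j + ((m:ℤ)+3 - k).toNat) * gZ 1 (m+1) (k-2)) := by
                rw [e1, e2]; ring
    · -- k ≥ m+4 : degenerate
      have hz0 : gZ 1 (m+3) k = 0 := gZ_big (by push_cast; omega)
      have hz1 : gZ 1 (m+2) k = 0 := gZ_big (by push_cast; omega)
      have hz2 : gZ 1 (m+1) (k-1) = 0 := gZ_big (by push_cast; omega)
      have hz3 : gZ 1 (m+1) (k-2) = 0 := gZ_big (by push_cast; omega)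
      rw [hm2, hm1, hm0, hEE, hOO, hdm1, hz0, hz1, hz2, hz3]
      ring

lemma key2 (m : ℕ) (j : ℤ) : OO m j = - EE m (j+1) := by
  obtain ⟨d, hd⟩ : ∃ d : ℤ, d = (m:ℤ)+2-5*j := ⟨_, rfl⟩
  obtain ⟨k, hk⟩ : ∃ k : ℤ, k = d/2 := ⟨_, rfl⟩
  have hOOxp : OO m j = if d % 2 = 0 then 0 else
      sg j * (X:R)^(ee j + ((m:ℤ)+3 - k).toNat) * gZ 1 (m+1) (k - 2) := by
    unfold OO lO; rw [← hd, ← hk]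
  rcases Int.emod_two_eq_zero_or_one d with hpar | hpar
  · have hEExp : EE m (j+1) = 0 := by
      unfold EE
      rw [show ((m:ℤ)+2-5*(j+1)) = d - 5 from by omega, if_neg (by omega)]
    rw [hOOxp, hEExp, if_pos hpar]
    simp
  · have hEExp : EE m (j+1) =
        sg (j+1) * (X:R)^(ee (j+1) + (k-2).toNat) * gZ 1 (m+1) (k-2) := by
      unfold EE lE
      rw [show ((m:ℤ)+2-5*(j+1)) = d - 5 from by omega,
        show ((d-5)/2 : ℤ) = k - 2 from by omega, if_pos (by omega)]
    rw [hOOxp, hEExp, if_neg (by omega)]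
    rcases lt_or_ge (k-2) 0 with hz | hz
    · rw [gZ_neg (by omega : k - 2 < 0)]
      simp
    rcases lt_or_ge ((m:ℤ)+1) (k-2) with hz2 | hz2
    · rw [gZ_big (by push_cast; omega : ((m+1 : ℕ) : ℤ) < k - 2)]
      simp
    · -- main case: exponents match
      have hsg := sg_succ j
      have hes := ee_succ j
      have hexp : ee (j+1) + (k-2).toNat = ee j + ((m:ℤ)+3 - k).toNat := by omega
      rw [hsg, hexp]
      ring

lemma EE_eq_zero {m : ℕ} {j : ℤ} (h : (m:ℤ)+6 < 5*|j|) : EE m j = 0 := by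
  unfold EE lE
  rcases abs_cases j with ⟨h1, h2⟩ | ⟨h1, h2⟩
  · rw [gZ_neg (by omega : ((m:ℤ)+2 - 5*j)/2 < 0), mul_zero]
    split <;> rfl
  · rw [gZ_big (by push_cast; omega : ((m+1 : ℕ) : ℤ) < ((m:ℤ)+2 - 5*j)/2), mul_zero]
    split <;> rfl

lemma Drec (m : ℕ) : DD (m+2) = DD (m+1) + (X:R)^(m+2) * DD m := by
  obtain ⟨a, ha⟩ : ∃ a : ℤ, a = -(m:ℤ)-8 := ⟨_, rfl⟩
  obtain ⟨b, hb⟩ : ∃ b : ℤ, b = (m:ℤ)+8 := ⟨_, rfl⟩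
  have h2 : DD (m+2) = ∑ j ∈ Finset.Icc a b, dT (m+2) j :=
    (DD_eq_sum (by push_cast; omega) (by push_cast; omega)).symm
  have h1 : ∑ j ∈ Finset.Icc a b, dT (m+1) j = DD (m+1) :=
    DD_eq_sum (by push_cast; omega) (by push_cast; omega)
  have h0 : ∑ j ∈ Finset.Icc a b, dT m j = DD m :=
    DD_eq_sum (by push_cast; omega) (by push_cast; omega)
  have hEO : ∑ j ∈ Finset.Icc a b, (EE m j + OO m j) = 0 := by
    rw [Finset.sum_add_distrib]
    have hOO : ∑ j ∈ Finset.Icc a b, OO m j = - ∑ j ∈ Finset.Icc a b, EE m (j+1) := by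
      rw [← Finset.sum_neg_distrib]
      exact Finset.sum_congr rfl fun j _ => by rw [key2]
    have hshift : ∑ j ∈ Finset.Icc a b, EE m (j+1) = ∑ j ∈ Finset.Icc (a+1) (b+1), EE m j := by
      rw [← Finset.map_add_right_Icc a b 1, Finset.sum_map]
      rfl
    have hbig1 : ∑ j ∈ Finset.Icc a b, EE m j = ∑ j ∈ Finset.Icc a (b+1), EE m j := by
      apply Finset.sum_subset (Finset.Icc_subset_Icc le_rfl (by omega))
      intro j hj hj2
      rw [Finset.mem_Icc] at hj hj2
      apply EE_eq_zero
      rcases abs_cases j with ⟨x1, x2⟩ | ⟨x1, x2⟩ <;> omega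
    have hbig2 : ∑ j ∈ Finset.Icc (a+1) (b+1), EE m j = ∑ j ∈ Finset.Icc a (b+1), EE m j := by
      apply Finset.sum_subset (Finset.Icc_subset_Icc (by omega) le_rfl)
      intro j hj hj2
      rw [Finset.mem_Icc] at hj hj2
      apply EE_eq_zero
      rcases abs_cases j with ⟨x1, x2⟩ | ⟨x1, x2⟩ <;> omega
    rw [hOO, hshift, hbig2, ← hbig1]
    ring
  calc DD (m+2) = ∑ j ∈ Finset.Icc a b, dT (m+2) j := h2
    _ = ∑ j ∈ Finset.Icc a b, (dT (m+1) j + (X:R)^(m+2) * dT m j + (EE m j + OO m j)) :=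
        Finset.sum_congr rfl fun j _ => key1 m j
    _ = (∑ j ∈ Finset.Icc a b, dT (m+1) j) + (X:R)^(m+2) * (∑ j ∈ Finset.Icc a b, dT m j)
        + ∑ j ∈ Finset.Icc a b, (EE m j + OO m j) := by
          rw [Finset.sum_add_distrib, Finset.sum_add_distrib, Finset.mul_sum]
    _ = DD (m+1) + (X:R)^(m+2) * DD m := by rw [h1, h0, hEO, add_zero]


/-! ### the finite Jacobi-triple-product-style identity -/

def pR (c M : ℕ) : R := ∏ i ∈ Finset.range M, (1 - (X:R)^(5*i+c))

lemma pR_succ (c M : ℕ) : pR c (M+1) = pR c M * (1 - (X:R)^(5*M+c)) :=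
  Finset.prod_range_succ _ _

lemma Gzero (b : ℕ) :
    pR 4 b = ∑ j ∈ Finset.Icc (-(b:ℤ)) 0, sg j * (X:R)^(ff j) * gZ 5 b ((b:ℤ)+j) := by
  induction b with
  | zero =>
      simp only [pR, Finset.range_zero, Finset.prod_empty, Nat.cast_zero, neg_zero]
      rw [Finset.Icc_self, Finset.sum_singleton, gZ_of_nonneg (by norm_num)]
      simp [sg_zero, ff, ee, gB_n_zero (by norm_num : 0 < 5)]
  | succ b ih =>
      have h5 : 0 < 5 := by norm_num
      have hsplit : ∀ j ∈ Finset.Icc (-((b:ℤ)+1)) 0,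
          sg j * (X:R)^(ff j) * gZ 5 (b+1) (((b:ℤ)+1)+j)
          = sg j * (X:R)^(ff j) * gZ 5 b ((b:ℤ)+j)
            + sg j * (X:R)^(ff j) * ((X:R)^(5*(((b:ℤ)+1)+j).toNat) * gZ 5 b (((b:ℤ)+1)+j)) := by
        intro j hj
        rw [Finset.mem_Icc] at hj
        have hp := pascal1Z h5 b (((b:ℤ)+1)+j) (by omega)
        rw [show (((b:ℤ)+1)+j) - 1 = (b:ℤ)+j from by ring] at hp
        rw [hp]
        ring
      have e1 : ∑ j ∈ Finset.Icc (-((b:ℤ)+1)) 0, sg j * (X:R)^(ff j) * gZ 5 b ((b:ℤ)+j)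
          = ∑ j ∈ Finset.Icc (-(b:ℤ)) 0, sg j * (X:R)^(ff j) * gZ 5 b ((b:ℤ)+j) := by
        apply (Finset.sum_subset (Finset.Icc_subset_Icc (by omega) le_rfl) _).symm
        intro j hj hj2
        rw [Finset.mem_Icc] at hj hj2
        rw [gZ_neg (by omega : (b:ℤ)+j < 0), mul_zero]
      have himg : Finset.Icc (-(b:ℤ)) 1 = (Finset.Icc (-((b:ℤ)+1)) 0).image (· + 1) := by
        ext x
        simp only [Finset.mem_Icc, Finset.mem_image]
        constructor
        · intro hx; exact ⟨x - 1, by omega, by ring⟩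
        · rintro ⟨y, hy, rfl⟩; omega
      have hre : ∑ j ∈ Finset.Icc (-((b:ℤ)+1)) 0,
          sg j * (X:R)^(ff j) * ((X:R)^(5*(((b:ℤ)+1)+j).toNat) * gZ 5 b (((b:ℤ)+1)+j))
          = ∑ i ∈ Finset.Icc (-(b:ℤ)) 1,
            sg (i-1) * (X:R)^(ff (i-1)) * ((X:R)^(5*((b:ℤ)+i).toNat) * gZ 5 b ((b:ℤ)+i)) := by
        rw [himg, Finset.sum_image (by intro x _ y _ h; exact add_right_cancel h)]
        apply Finset.sum_congr rfl
        intro j _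
        rw [show (j+1-1 : ℤ) = j from by ring, show (b:ℤ)+(j+1) = ((b:ℤ)+1)+j from by ring]
      have hdrop : ∑ i ∈ Finset.Icc (-(b:ℤ)) 1,
          sg (i-1) * (X:R)^(ff (i-1)) * ((X:R)^(5*((b:ℤ)+i).toNat) * gZ 5 b ((b:ℤ)+i))
          = ∑ i ∈ Finset.Icc (-(b:ℤ)) 0,
            sg (i-1) * (X:R)^(ff (i-1)) * ((X:R)^(5*((b:ℤ)+i).toNat) * gZ 5 b ((b:ℤ)+i)) := by
        apply (Finset.sum_subset (Finset.Icc_subset_Icc le_rfl (by omega)) _).symm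
        intro i hi hi2
        rw [Finset.mem_Icc] at hi hi2
        rw [gZ_big (by push_cast; omega : ((b:ℕ):ℤ) < (b:ℤ)+i), mul_zero, mul_zero]
      have e2 : ∑ j ∈ Finset.Icc (-((b:ℤ)+1)) 0,
          sg j * (X:R)^(ff j) * ((X:R)^(5*(((b:ℤ)+1)+j).toNat) * gZ 5 b (((b:ℤ)+1)+j))
          = -((X:R)^(5*b+4) * (∑ j ∈ Finset.Icc (-(b:ℤ)) 0,
              sg j * (X:R)^(ff j) * gZ 5 b ((b:ℤ)+j))) := by
        rw [hre, hdrop, Finset.mul_sum, ← Finset.sum_neg_distrib]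
        apply Finset.sum_congr rfl
        intro i hi
        rw [Finset.mem_Icc] at hi
        have hsg : sg (i-1) = - sg i := by
          have := sg_succ (i-1)
          rw [show (i-1+1 : ℤ) = i from by ring] at this
          linear_combination this
        have hff : ff (i-1) + 5*((b:ℤ)+i).toNat = (5*b+4) + ff i := by
          have h1 := ff_succ (i-1)
          rw [show (i-1+1 : ℤ) = i from by ring] at h1
          omega
        rw [hsg]
        calc (- sg i) * (X:R)^(ff (i-1)) * ((X:R)^(5*((b:ℤ)+i).toNat) * gZ 5 b ((b:ℤ)+i))
            = -(sg i * ((X:R)^(ff (i-1)) * (X:R)^(5*((b:ℤ)+i).toNat)) * gZ 5 b ((b:ℤ)+i)) := by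
              ring
          _ = -((X:R)^(5*b+4) * (sg i * (X:R)^(ff i) * gZ 5 b ((b:ℤ)+i))) := by
              rw [← pow_add, hff, pow_add]; ring
      have hfin : ∑ j ∈ Finset.Icc (-((b:ℤ)+1)) 0,
          sg j * (X:R)^(ff j) * gZ 5 (b+1) (((b:ℤ)+1)+j)
          = pR 4 b * (1 - (X:R)^(5*b+4)) := by
        rw [Finset.sum_congr rfl hsplit, Finset.sum_add_distrib, e1, e2, ← ih]
        ring
      rw [pR_succ 4 b, show ((b+1:ℕ):ℤ) = (b:ℤ)+1 from by push_cast; ring, ← hfin]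

lemma Gmain (a b : ℕ) :
    pR 1 a * pR 4 b
      = ∑ j ∈ Finset.Icc (-(b:ℤ)) (a:ℤ), sg j * (X:R)^(ff j) * gZ 5 (a+b) ((b:ℤ)+j) := by
  induction a with
  | zero =>
      simpa [pR, Nat.zero_add] using Gzero b
  | succ a ih =>
      have h5 : 0 < 5 := by norm_num
      have hsplit : ∀ j ∈ Finset.Icc (-(b:ℤ)) ((a:ℤ)+1),
          sg j * (X:R)^(ff j) * gZ 5 (a+1+b) ((b:ℤ)+j)
          = sg j * (X:R)^(ff j) * gZ 5 (a+b) ((b:ℤ)+j)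
            + sg j * (X:R)^(ff j) *
              ((X:R)^(5*(a+b+1-((b:ℤ)+j).toNat)) * gZ 5 (a+b) ((b:ℤ)+j-1)) := by
        intro j hj
        rw [Finset.mem_Icc] at hj
        have hp := pascal2Z h5 (a+b) ((b:ℤ)+j) (by omega) (by push_cast; omega)
        rw [show a+1+b = (a+b)+1 from by omega, hp]
        ring
      have e1 : ∑ j ∈ Finset.Icc (-(b:ℤ)) ((a:ℤ)+1),
          sg j * (X:R)^(ff j) * gZ 5 (a+b) ((b:ℤ)+j)
          = ∑ j ∈ Finset.Icc (-(b:ℤ)) (a:ℤ), sg j * (X:R)^(ff j) * gZ 5 (a+b) ((b:ℤ)+j) := by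
        apply (Finset.sum_subset (Finset.Icc_subset_Icc le_rfl (by omega)) _).symm
        intro j hj hj2
        rw [Finset.mem_Icc] at hj hj2
        rw [gZ_big (by push_cast; omega : ((a+b:ℕ):ℤ) < (b:ℤ)+j), mul_zero]
      have himg : Finset.Icc (-(b:ℤ)) ((a:ℤ)+1) = (Finset.Icc (-(b:ℤ)-1) (a:ℤ)).image (· + 1) := by
        ext x
        simp only [Finset.mem_Icc, Finset.mem_image]
        constructor
        · intro hx; exact ⟨x - 1, by omega, by ring⟩
        · rintro ⟨y, hy, rfl⟩; omega
      have hre : ∑ j ∈ Finset.Icc (-(b:ℤ)) ((a:ℤ)+1),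
          sg j * (X:R)^(ff j) *
            ((X:R)^(5*(a+b+1-((b:ℤ)+j).toNat)) * gZ 5 (a+b) ((b:ℤ)+j-1))
          = ∑ i ∈ Finset.Icc (-(b:ℤ)-1) (a:ℤ),
            sg (i+1) * (X:R)^(ff (i+1)) *
              ((X:R)^(5*(a+b+1-((b:ℤ)+i+1).toNat)) * gZ 5 (a+b) ((b:ℤ)+i)) := by
        rw [himg, Finset.sum_image (by intro x _ y _ h; exact add_right_cancel h)]
        apply Finset.sum_congr rfl
        intro i _
        rw [show (b:ℤ)+(i+1)-1 = (b:ℤ)+i from by ring,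
          show (b:ℤ)+(i+1) = (b:ℤ)+i+1 from by ring]
      have hdrop : ∑ i ∈ Finset.Icc (-(b:ℤ)-1) (a:ℤ),
          sg (i+1) * (X:R)^(ff (i+1)) *
            ((X:R)^(5*(a+b+1-((b:ℤ)+i+1).toNat)) * gZ 5 (a+b) ((b:ℤ)+i))
          = ∑ i ∈ Finset.Icc (-(b:ℤ)) (a:ℤ),
            sg (i+1) * (X:R)^(ff (i+1)) *
              ((X:R)^(5*(a+b+1-((b:ℤ)+i+1).toNat)) * gZ 5 (a+b) ((b:ℤ)+i)) := by
        apply (Finset.sum_subset (Finset.Icc_subset_Icc (by omega) le_rfl) _).symm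
        intro i hi hi2
        rw [Finset.mem_Icc] at hi hi2
        rw [gZ_neg (by omega : (b:ℤ)+i < 0), mul_zero, mul_zero]
      have e2 : ∑ j ∈ Finset.Icc (-(b:ℤ)) ((a:ℤ)+1),
          sg j * (X:R)^(ff j) *
            ((X:R)^(5*(a+b+1-((b:ℤ)+j).toNat)) * gZ 5 (a+b) ((b:ℤ)+j-1))
          = -((X:R)^(5*a+1) * (∑ j ∈ Finset.Icc (-(b:ℤ)) (a:ℤ),
              sg j * (X:R)^(ff j) * gZ 5 (a+b) ((b:ℤ)+j))) := by
        rw [hre, hdrop, Finset.mul_sum, ← Finset.sum_neg_distrib]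
        apply Finset.sum_congr rfl
        intro i hi
        rw [Finset.mem_Icc] at hi
        have hsg : sg (i+1) = - sg i := sg_succ i
        have hff : ff (i+1) + 5*(a+b+1-((b:ℤ)+i+1).toNat) = (5*a+1) + ff i := by
          have h1 := ff_succ i
          omega
        rw [hsg]
        calc (- sg i) * (X:R)^(ff (i+1)) *
              ((X:R)^(5*(a+b+1-((b:ℤ)+i+1).toNat)) * gZ 5 (a+b) ((b:ℤ)+i))
            = -(sg i * ((X:R)^(ff (i+1)) * (X:R)^(5*(a+b+1-((b:ℤ)+i+1).toNat)))
                * gZ 5 (a+b) ((b:ℤ)+i)) := by ring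
          _ = -((X:R)^(5*a+1) * (sg i * (X:R)^(ff i) * gZ 5 (a+b) ((b:ℤ)+i))) := by
              rw [← pow_add, hff, pow_add]; ring
      have hfin : ∑ j ∈ Finset.Icc (-(b:ℤ)) ((a:ℤ)+1),
          sg j * (X:R)^(ff j) * gZ 5 (a+1+b) ((b:ℤ)+j)
          = (pR 1 a * pR 4 b) * (1 - (X:R)^(5*a+1)) := by
        rw [Finset.sum_congr rfl hsplit, Finset.sum_add_distrib, e1, e2, ← ih]
        ring
      rw [show (((a+1:ℕ)):ℤ) = (a:ℤ)+1 from by push_cast; ring, hfin, pR_succ 1 a]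
      ring


/-! ### bridges to the statement's definitions -/

lemma qqPoch_eq (n : ℕ) : qqPoch n = pB 1 n := by
  unfold qqPoch pB
  exact Finset.prod_congr rfl fun j _ => by rw [one_mul]

lemma qBinom_eq (r n : ℕ) : qBinom r n = gB 1 r n := by
  unfold qBinom gB iv
  rw [qqPoch_eq, qqPoch_eq, qqPoch_eq]

lemma qBinom_zero_of {M n : ℕ} (h : M < 2*n) : qBinom (M - n) n = 0 := by
  rw [qBinom_eq]
  exact gB_zero (by omega)

lemma qBinom_n_zero (r : ℕ) : qBinom r 0 = 1 := by
  rw [qBinom_eq]; exact gB_n_zero Nat.one_pos r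

lemma schurB_ext (m K : ℕ) (h : m+1 ≤ K) :
    schurB m = ∑ n ∈ Finset.range K, (X : R)^(n*(n+1)) * qBinom (m - n) n := by
  unfold schurB
  apply Finset.sum_subset (Finset.range_subset_range.mpr h)
  intro n hn hn2
  rw [Finset.mem_range] at hn hn2
  rw [qBinom_zero_of (by omega : m < 2*n), mul_zero]

lemma Brec (m : ℕ) : schurB (m+2) = schurB (m+1) + (X:R)^(m+2) * schurB m := by
  have key : ∀ n < m+2, (X : R)^((n+1)*(n+2)) * qBinom (m+2 - (n+1)) (n+1)
      = (X : R)^((n+1)*(n+2)) * qBinom (m+1 - (n+1)) (n+1)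
        + (X:R)^(m+2) * ((X : R)^(n*(n+1)) * qBinom (m - n) n) := by
    intro n _
    rcases le_or_gt (2*n) m with h2 | h2
    · have e1 : m+2-(n+1) = (m-n)+1 := by omega
      have e2 : m+1-(n+1) = m-n := by omega
      rw [e1, e2, qBinom_eq, qBinom_eq, qBinom_eq,
        pascal2 Nat.one_pos (m-n) (n+1) (by omega)]
      have e3 : (m-n)+1-(n+1) = m - 2*n := by omega
      have e4 : n+1-1 = n := by omega
      rw [e3, e4, one_mul]
      have e5 : (X:R)^((n+1)*(n+2)) * ((X:R)^(m-2*n) * gB 1 (m-n) n)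
          = (X:R)^(m+2) * ((X:R)^(n*(n+1)) * gB 1 (m-n) n) := by
        rw [← mul_assoc, ← pow_add, ← mul_assoc, ← pow_add]
        congr 2
        have : (n+1)*(n+2) = n*(n+1) + 2*(n+1) := by ring
        omega
      rw [mul_add, e5]
    · rw [qBinom_zero_of (by omega : m+2 < 2*(n+1)),
        qBinom_zero_of (by omega : m+1 < 2*(n+1)),
        qBinom_zero_of (by omega : m < 2*n)]
      simp
  have h2 : schurB (m+2)
      = ∑ n ∈ Finset.range (m+2), (X : R)^((n+1)*((n+1)+1)) * qBinom (m+2 - (n+1)) (n+1)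
        + (X : R)^(0*(0+1)) * qBinom (m+2-0) 0 := by
    unfold schurB
    rw [show m+2+1 = (m+2)+1 from rfl, Finset.sum_range_succ']
  have h1 : schurB (m+1)
      = ∑ n ∈ Finset.range (m+2), (X : R)^((n+1)*((n+1)+1)) * qBinom (m+1 - (n+1)) (n+1)
        + (X : R)^(0*(0+1)) * qBinom (m+1-0) 0 := by
    rw [schurB_ext (m+1) (m+3) (by omega), show m+3 = (m+2)+1 from rfl,
      Finset.sum_range_succ']
  have h0 : schurB m = ∑ n ∈ Finset.range (m+2), (X : R)^(n*(n+1)) * qBinom (m - n) n :=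
    schurB_ext m (m+2) (by omega)
  rw [h2, h1, h0, Finset.mul_sum]
  rw [Finset.sum_congr rfl (fun n hn => key n (Finset.mem_range.mp hn)),
    Finset.sum_add_distrib]
  rw [qBinom_n_zero, qBinom_n_zero]
  ring

lemma schurB_zero : schurB 0 = 1 := by
  unfold schurB
  rw [Finset.sum_range_one, qBinom_n_zero]
  norm_num

lemma schurB_one : schurB 1 = 1 := by
  unfold schurB
  rw [Finset.sum_range_succ, Finset.sum_range_one, qBinom_n_zero]
  have : qBinom (1-1) 1 = 0 := by rw [qBinom_eq]; exact gB_zero (by omega)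
  rw [this]
  norm_num

lemma ee_zero : ee 0 = 0 := by simp [ee]

lemma DD_zero : DD 0 = 1 := by
  unfold DD
  rw [Finset.sum_eq_single 0]
  · unfold dT
    rw [sg_zero, ee_zero, show ((((0:ℕ)):ℤ) - 5*0)/2 = 0 from by norm_num,
      gZ_of_nonneg le_rfl]
    simpa using gB_n_zero Nat.one_pos 1
  · intro j hj hne
    apply dT_eq_zero
    rw [Finset.mem_Icc] at hj
    rcases abs_cases j with ⟨x1,x2⟩|⟨x1,x2⟩ <;> push_cast <;> omega
  · intro h
    exact absurd (Finset.mem_Icc.mpr ⟨by omega, by omega⟩) h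

lemma DD_one : DD 1 = 1 := by
  unfold DD
  rw [Finset.sum_eq_single 0]
  · unfold dT
    rw [sg_zero, ee_zero, show ((((1:ℕ)):ℤ) - 5*0)/2 = 0 from by norm_num,
      gZ_of_nonneg le_rfl]
    simpa using gB_n_zero Nat.one_pos 2
  · intro j hj hne
    rw [Finset.mem_Icc] at hj
    unfold dT
    rcases lt_or_ge j 0 with hj0 | hj0
    · rw [gZ_big (by push_cast; omega : ((1+1:ℕ):ℤ) < ((((1:ℕ)):ℤ) - 5*j)/2), mul_zero]
    · rw [gZ_neg (by push_cast; omega : ((((1:ℕ)):ℤ) - 5*j)/2 < 0), mul_zero]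
  · intro h
    exact absurd (Finset.mem_Icc.mpr ⟨by omega, by omega⟩) h

lemma BD (m : ℕ) : schurB m = DD m := by
  induction m using Nat.twoStepInduction with
  | zero => rw [schurB_zero, DD_zero]
  | one => rw [schurB_one, DD_one]
  | more n ih1 ih2 => rw [Brec n, Drec n, ih1, ih2]


/-! ### stability in m -/

lemma Bstab (k K : ℕ) (h : k ≤ K) : (X:R)^k ∣ schurB K - schurB k := by
  induction K with
  | zero => rw [show k = 0 from by omega]; simp
  | succ K ih =>
      rcases Nat.lt_or_ge k (K+1) with h2 | h2
      · have hd : schurB (K+1) - schurB k = (schurB (K+1) - schurB K) + (schurB K - schurB k) := by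
          ring
        rw [hd]
        apply dvd_add _ (ih (by omega))
        rcases K with _ | K'
        · rw [schurB_one, schurB_zero, sub_self]
          exact dvd_zero _
        · rw [Brec K', show schurB (K'+1) + (X:R)^(K'+2) * schurB K' - schurB (K'+1)
              = (X:R)^(K'+2) * schurB K' from by ring]
          exact ((pow_dvd_pow (X:R) (by omega : k ≤ K'+2)).mul_right _)
      · rw [show k = K+1 from by omega, sub_self]
        exact dvd_zero _

lemma Qstab (k K : ℕ) (h : k ≤ K) : (X:R)^k ∣ Qprod K - Qprod k := by
  induction K with
  | zero => rw [show k = 0 from by omega]; simp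
  | succ K ih =>
      rcases Nat.lt_or_ge k (K+1) with h2 | h2
      · have hQ : Qprod (K+1) = Qprod K *
            PowerSeries.invOfUnit ((1 - (X:R)^(5*K+2)) * (1 - (X:R)^(5*K+3))) 1 :=
          Finset.prod_range_succ _ _
        have hcc : constantCoeff ((1 - (X:R)^(5*K+2)) * (1 - (X:R)^(5*K+3))) = 1 := by
          simp
        have hu : ((1 - (X:R)^(5*K+2)) * (1 - (X:R)^(5*K+3))) *
            iv ((1 - (X:R)^(5*K+2)) * (1 - (X:R)^(5*K+3))) = 1 := mul_iv hcc
        have hiv1 : (X:R)^k ∣ iv ((1 - (X:R)^(5*K+2)) * (1 - (X:R)^(5*K+3))) - 1 := by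
          have e : iv ((1 - (X:R)^(5*K+2)) * (1 - (X:R)^(5*K+3))) - 1
              = (1 - ((1 - (X:R)^(5*K+2)) * (1 - (X:R)^(5*K+3)))) *
                iv ((1 - (X:R)^(5*K+2)) * (1 - (X:R)^(5*K+3))) := by
            linear_combination hu
          rw [e]
          apply Dvd.dvd.mul_right
          have e2 : 1 - ((1 - (X:R)^(5*K+2)) * (1 - (X:R)^(5*K+3)))
              = (X:R)^(5*K+2) + (X:R)^(5*K+3) - (X:R)^(5*K+2) * (X:R)^(5*K+3) := by ring
          rw [e2]
          apply dvd_sub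
          · exact dvd_add (pow_dvd_pow _ (by omega)) (pow_dvd_pow _ (by omega))
          · exact (pow_dvd_pow (X:R) (by omega : k ≤ 5*K+2)).mul_right _
        have hd : Qprod (K+1) - Qprod k
            = Qprod K * (iv ((1 - (X:R)^(5*K+2)) * (1 - (X:R)^(5*K+3))) - 1)
              + (Qprod K - Qprod k) := by
          rw [hQ]; unfold iv; ring
        rw [hd]
        exact dvd_add (hiv1.mul_left _) (ih (by omega))
      · rw [show k = K+1 from by omega, sub_self]
        exact dvd_zero _

/-! ### truncation claims -/

lemma Xm_dvd_trip {m e : ℕ} (h : m ≤ e) (c g : R) : (X:R)^m ∣ c * (X:R)^e * g :=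
  ((pow_dvd_pow (X:R) h).mul_left c).mul_right g

lemma claim1 (m M : ℕ) (hM : M = 7*m+7) :
    (X:R)^m ∣ DD M - (∑ j ∈ Finset.Icc (-(M:ℤ)-4) ((M:ℤ)+4), sg j * (X:R)^(ee j))
      * iv (pB 1 (M+1)) := by
  rw [DD, Finset.sum_mul, ← Finset.sum_sub_distrib]
  apply Finset.dvd_sum
  intro j hj
  rw [Finset.mem_Icc] at hj
  rcases le_or_gt m (ee j) with he | he
  · apply dvd_sub
    · exact Xm_dvd_trip he _ _
    · exact Xm_dvd_trip he _ _
  · have hjm : (j.natAbs : ℤ) < (m:ℤ) := by have := ee_ge j; omega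
    have habs := Int.natAbs_eq j
    have hk0 : 0 ≤ ((M:ℤ)-5*j)/2 := by omega
    unfold dT
    rw [gZ_of_nonneg hk0]
    have hsub : sg j * (X:R)^(ee j) * gB 1 (M+1) ((((M:ℤ)-5*j)/2).toNat)
        - sg j * (X:R)^(ee j) * iv (pB 1 (M+1))
        = sg j * (X:R)^(ee j) *
          (gB 1 (M+1) ((((M:ℤ)-5*j)/2).toNat) - iv (pB 1 (M+1))) := by ring
    rw [hsub]
    apply Dvd.dvd.mul_left
    apply trunc_gB_iv Nat.one_pos (by omega) (by omega) (by omega) (by omega)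

lemma claim2main (m M : ℕ) (hM : M = 7*m+7) :
    (X:R)^m ∣ pB 5 M * (∑ j ∈ Finset.Icc (-(M:ℤ)) ((M:ℤ)),
        sg j * (X:R)^(ff j) * gZ 5 (M+M) ((M:ℤ)+j))
      - ∑ j ∈ Finset.Icc (-(M:ℤ)) ((M:ℤ)), sg j * (X:R)^(ff j) := by
  rw [Finset.mul_sum, ← Finset.sum_sub_distrib]
  apply Finset.dvd_sum
  intro j hj
  rw [Finset.mem_Icc] at hj
  have hsub : pB 5 M * (sg j * (X:R)^(ff j) * gZ 5 (M+M) ((M:ℤ)+j)) - sg j * (X:R)^(ff j)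
      = sg j * (X:R)^(ff j) * (pB 5 M * gZ 5 (M+M) ((M:ℤ)+j) - 1) := by ring
  rw [hsub]
  rcases le_or_gt m (ff j) with he | he
  · exact Xm_dvd_trip he _ _
  · have hjm : (j.natAbs : ℤ) < (m:ℤ) := by have := ff_ge j; omega
    have habs := Int.natAbs_eq j
    apply Dvd.dvd.mul_left
    rw [gZ_of_nonneg (by omega : (0:ℤ) ≤ (M:ℤ)+j)]
    apply trunc_pB_gB (by norm_num : 0 < 5) (by omega) (by omega) (by omega) (by omega)

lemma reidx (M : ℕ) : ∑ j ∈ Finset.Icc (-(M:ℤ)) ((M:ℤ)), sg j * (X:R)^(ff j)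
    = ∑ j ∈ Finset.Icc (-(M:ℤ)) ((M:ℤ)), sg j * (X:R)^(ee j) := by
  have himg : Finset.Icc (-(M:ℤ)) ((M:ℤ))
      = (Finset.Icc (-(M:ℤ)) ((M:ℤ))).image (fun x => -x) := by
    ext x
    simp only [Finset.mem_Icc, Finset.mem_image]
    constructor
    · intro hx; exact ⟨-x, by omega, by ring⟩
    · rintro ⟨y, hy, rfl⟩; omega
  conv_rhs => rw [himg, Finset.sum_image (by intro x _ y _ h; exact neg_inj.mp h)]
  apply Finset.sum_congr rfl
  intro j _
  rw [sg_neg]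
  rfl

lemma rangeext (m M : ℕ) (hM : M = 7*m+7) :
    (X:R)^m ∣ (∑ j ∈ Finset.Icc (-(M:ℤ)-4) ((M:ℤ)+4), sg j * (X:R)^(ee j))
      - ∑ j ∈ Finset.Icc (-(M:ℤ)) ((M:ℤ)), sg j * (X:R)^(ee j) := by
  rw [← Finset.sum_sdiff_eq_sub (Finset.Icc_subset_Icc (by omega) (by omega))]
  apply Finset.dvd_sum
  intro j hj
  rw [Finset.mem_sdiff, Finset.mem_Icc, Finset.mem_Icc] at hj
  have hjm : (M:ℤ) < (j.natAbs : ℤ) := by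
    rcases Int.natAbs_eq j with h1 | h1 <;> omega
  have he : m ≤ ee j := by have := ee_ge j; omega
  exact (pow_dvd_pow (X:R) (by omega : m ≤ ee j)).mul_left _

/-! ### the product side, exactly -/

lemma qq5 (M : ℕ) : pB 1 (5*M) = pR 1 M * pR 2 M * pR 3 M * pR 4 M * pR 5 M := by
  induction M with
  | zero => simp [pB, pR]
  | succ M ih =>
      rw [show 5*(M+1) = (5*M)+1+1+1+1+1 from by ring,
        pB_succ 1 ((5*M)+1+1+1+1), pB_succ 1 ((5*M)+1+1+1), pB_succ 1 ((5*M)+1+1),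
        pB_succ 1 ((5*M)+1), pB_succ 1 (5*M), ih,
        pR_succ 1 M, pR_succ 2 M, pR_succ 3 M, pR_succ 4 M, pR_succ 5 M]
      ring

lemma QprodInv (M : ℕ) : Qprod M * (pR 2 M * pR 3 M) = 1 := by
  induction M with
  | zero => simp [Qprod, pR]
  | succ M ih =>
      have hQ : Qprod (M+1) = Qprod M *
          PowerSeries.invOfUnit ((1 - (X:R)^(5*M+2)) * (1 - (X:R)^(5*M+3))) 1 :=
        Finset.prod_range_succ _ _
      have hcc : constantCoeff ((1 - (X:R)^(5*M+2)) * (1 - (X:R)^(5*M+3))) = 1 := by simp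
      have hu := mul_iv hcc
      rw [hQ, pR_succ 2 M, pR_succ 3 M]
      calc Qprod M * iv ((1 - (X:R)^(5*M+2)) * (1 - (X:R)^(5*M+3))) *
            (pR 2 M * (1 - (X:R)^(5*M+2)) * (pR 3 M * (1 - (X:R)^(5*M+3))))
          = (Qprod M * (pR 2 M * pR 3 M)) *
            (((1 - (X:R)^(5*M+2)) * (1 - (X:R)^(5*M+3))) *
              iv ((1 - (X:R)^(5*M+2)) * (1 - (X:R)^(5*M+3)))) := by ring
        _ = 1 := by rw [ih, hu, one_mul]

lemma QW (M : ℕ) : Qprod M = iv (pB 1 (5*M)) * (pR 1 M * pR 4 M * pR 5 M) := by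
  apply mul_left_cancel₀ (pB_ne_zero Nat.one_pos (5*M))
  calc pB 1 (5*M) * Qprod M
      = (Qprod M * (pR 2 M * pR 3 M)) * (pR 1 M * pR 4 M * pR 5 M) := by
        rw [qq5]; ring
    _ = pR 1 M * pR 4 M * pR 5 M := by rw [QprodInv]; ring
    _ = pB 1 (5*M) * (iv (pB 1 (5*M)) * (pR 1 M * pR 4 M * pR 5 M)) := by
        rw [← mul_assoc, mul_iv (cc_pB Nat.one_pos _), one_mul]

lemma pR5pB (M : ℕ) : pR 5 M = pB 5 M :=
  Finset.prod_congr rfl fun i _ => by rw [show 5*i+5 = 5*(i+1) from by ring]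

lemma QprodG (M : ℕ) : Qprod M = iv (pB 1 (5*M)) *
    (pB 5 M * ∑ j ∈ Finset.Icc (-(M:ℤ)) ((M:ℤ)),
      sg j * (X:R)^(ff j) * gZ 5 (M+M) ((M:ℤ)+j)) := by
  rw [QW M]
  congr 1
  rw [← Gmain M M, ← pR5pB]
  ring

end RRaux

open RRaux in
/-- `B_m` agrees with `Q_m` through degree `m−1`:  `B_m − Q_m ∈ q^m ℤ⟦q⟧`. -/
theorem schurB_agrees_with_Qprod (m : ℕ) :
    (PowerSeries.X : PowerSeries ℤ) ^ m ∣ schurB m - Qprod m := by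
  obtain ⟨M, hM⟩ : ∃ M, M = 7*m+7 := ⟨_, rfl⟩
  have h1 : (X:R)^m ∣ schurB M - schurB m := by
    have := Bstab m M (by omega)
    exact (pow_dvd_pow (X:R) le_rfl).trans this
  have h2 : (X:R)^m ∣ Qprod M - Qprod m := Qstab m M (by omega)
  have c1 := claim1 m M hM
  have c2 : (X:R)^m ∣ (∑ j ∈ Finset.Icc (-(M:ℤ)-4) ((M:ℤ)+4), sg j * (X:R)^(ee j))
      * iv (pB 1 (M+1))
      - (∑ j ∈ Finset.Icc (-(M:ℤ)-4) ((M:ℤ)+4), sg j * (X:R)^(ee j)) * iv (pB 1 (5*M)) := by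
    rw [show (∑ j ∈ Finset.Icc (-(M:ℤ)-4) ((M:ℤ)+4), sg j * (X:R)^(ee j)) * iv (pB 1 (M+1))
        - (∑ j ∈ Finset.Icc (-(M:ℤ)-4) ((M:ℤ)+4), sg j * (X:R)^(ee j)) * iv (pB 1 (5*M))
        = (∑ j ∈ Finset.Icc (-(M:ℤ)-4) ((M:ℤ)+4), sg j * (X:R)^(ee j))
          * (iv (pB 1 (M+1)) - iv (pB 1 (5*M))) from by ring]
    apply Dvd.dvd.mul_left
    exact (pow_dvd_pow (X:R) (by omega : m ≤ 1*(M+1+1))).trans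
      (iv_sub Nat.one_pos (by omega : M+1 ≤ 5*M))
  have c3 : (X:R)^m ∣ (∑ j ∈ Finset.Icc (-(M:ℤ)-4) ((M:ℤ)+4), sg j * (X:R)^(ee j))
      * iv (pB 1 (5*M))
      - (∑ j ∈ Finset.Icc (-(M:ℤ)) ((M:ℤ)), sg j * (X:R)^(ee j)) * iv (pB 1 (5*M)) := by
    rw [show (∑ j ∈ Finset.Icc (-(M:ℤ)-4) ((M:ℤ)+4), sg j * (X:R)^(ee j)) * iv (pB 1 (5*M))
        - (∑ j ∈ Finset.Icc (-(M:ℤ)) ((M:ℤ)), sg j * (X:R)^(ee j)) * iv (pB 1 (5*M))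
        = ((∑ j ∈ Finset.Icc (-(M:ℤ)-4) ((M:ℤ)+4), sg j * (X:R)^(ee j))
            - ∑ j ∈ Finset.Icc (-(M:ℤ)) ((M:ℤ)), sg j * (X:R)^(ee j)) * iv (pB 1 (5*M))
        from by ring]
    exact (rangeext m M hM).mul_right _
  have c5 : (X:R)^m ∣ Qprod M
      - (∑ j ∈ Finset.Icc (-(M:ℤ)) ((M:ℤ)), sg j * (X:R)^(ff j)) * iv (pB 1 (5*M)) := by
    rw [QprodG M, show iv (pB 1 (5*M)) * (pB 5 M * ∑ j ∈ Finset.Icc (-(M:ℤ)) ((M:ℤ)),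
          sg j * (X:R)^(ff j) * gZ 5 (M+M) ((M:ℤ)+j))
        - (∑ j ∈ Finset.Icc (-(M:ℤ)) ((M:ℤ)), sg j * (X:R)^(ff j)) * iv (pB 1 (5*M))
        = ((pB 5 M * ∑ j ∈ Finset.Icc (-(M:ℤ)) ((M:ℤ)),
            sg j * (X:R)^(ff j) * gZ 5 (M+M) ((M:ℤ)+j))
          - ∑ j ∈ Finset.Icc (-(M:ℤ)) ((M:ℤ)), sg j * (X:R)^(ff j)) * iv (pB 1 (5*M))
        from by ring]
    exact (claim2main m M hM).mul_right _
  have hA : (X:R)^m ∣ schurB M - Qprod M := by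
    have e : schurB M - Qprod M
        = (DD M - (∑ j ∈ Finset.Icc (-(M:ℤ)-4) ((M:ℤ)+4), sg j * (X:R)^(ee j))
            * iv (pB 1 (M+1)))
          + ((∑ j ∈ Finset.Icc (-(M:ℤ)-4) ((M:ℤ)+4), sg j * (X:R)^(ee j)) * iv (pB 1 (M+1))
            - (∑ j ∈ Finset.Icc (-(M:ℤ)-4) ((M:ℤ)+4), sg j * (X:R)^(ee j)) * iv (pB 1 (5*M)))
          + ((∑ j ∈ Finset.Icc (-(M:ℤ)-4) ((M:ℤ)+4), sg j * (X:R)^(ee j)) * iv (pB 1 (5*M))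
            - (∑ j ∈ Finset.Icc (-(M:ℤ)) ((M:ℤ)), sg j * (X:R)^(ee j)) * iv (pB 1 (5*M)))
          - (Qprod M
            - (∑ j ∈ Finset.Icc (-(M:ℤ)) ((M:ℤ)), sg j * (X:R)^(ff j)) * iv (pB 1 (5*M))) := by
      rw [BD M, reidx M]
      ring
    rw [e]
    exact dvd_sub (dvd_add (dvd_add c1 c2) c3) c5
  have efin : schurB m - Qprod m
      = (schurB M - Qprod M) + (Qprod M - Qprod m) - (schurB M - schurB m) := by ring
  rw [efin]
  exact dvd_sub (dvd_add hA h2) h1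
end
end

section
/- Eisenstein expression of the Rogers–Ramanujan Lambert series: for every q ∈ ℂ with |q| < 1, S₁(q) + S₄(q) + 1/12 = −E₊(q)/48 + E_χ(q)/2 and S₂(q) + S₃(q) + 1/12 = −E₊(q)/48 − E_χ(q)/2. -/
noncomputable section

open Finset

/-- Geometric-series row sum. -/
lemma row_hasSum {q : ℂ} (hq : ‖q‖ < 1) (a : ℕ → ℂ) (ha0 : a 0 = 0) (n : ℕ) :
    HasSum (fun j : ℕ => if j = 0 then 0 else a n * q ^ (n * j))
      (a n * q ^ n / (1 - q ^ n)) := by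
  rcases eq_or_ne n 0 with rfl | hn
  · simpa [ha0] using (hasSum_zero : HasSum (fun _ : ℕ => (0:ℂ)) 0)
  · have hqn : ‖q ^ n‖ < 1 := by
      rw [norm_pow]
      exact pow_lt_one₀ (norm_nonneg q) hq hn
    have h1 := (hasSum_geometric_of_norm_lt_one hqn).mul_left (a n * q ^ n)
    have e : (fun j : ℕ => a n * q ^ n * (q ^ n) ^ j)
        = fun j : ℕ => (if j + 1 = 0 then 0 else a n * q ^ (n * (j + 1))) := by
      funext j
      rw [if_neg (Nat.succ_ne_zero j), pow_mul, pow_succ]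
      ring
    rw [e, ← div_eq_mul_inv] at h1
    simpa using (hasSum_nat_add_iff (f := fun j : ℕ => if j = 0 then 0 else a n * q ^ (n * j)) 1).mp h1

set_option maxHeartbeats 2000000 in
lemma summable_G {q : ℂ} (hq : ‖q‖ < 1) (a : ℕ → ℂ) (ha : ∀ n, ‖a n‖ ≤ n) :
    Summable (fun p : ℕ × ℕ => if p.2 = 0 then 0 else a p.1 * q ^ (p.1 * p.2)) := by
  have hr0 : (0:ℝ) ≤ ‖q‖ := norm_nonneg q
  have hf : Summable (fun n : ℕ => (n : ℝ) * ‖q‖ ^ n) := by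
    simpa using summable_pow_mul_geometric_of_norm_lt_one (R := ℝ) 1 (by simpa using hq)
  have hg : Summable (fun j : ℕ => ‖q‖ ^ (j - 1)) := by
    apply (summable_nat_add_iff 1).mp
    simpa using summable_geometric_of_lt_one hr0 hq
  have hM : Summable (fun p : ℕ × ℕ => ((p.1 : ℝ) * ‖q‖ ^ p.1) * ‖q‖ ^ (p.2 - 1)) :=
    hf.mul_of_nonneg hg (fun n => by positivity) (fun j => by positivity)
  set_option maxHeartbeats 1000000 in
  apply Summable.of_norm_bounded hM
  rintro ⟨n, j⟩
  dsimp only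
  rcases eq_or_ne j 0 with rfl | hj
  · rw [if_pos rfl, norm_zero]
    positivity
  · rw [if_neg hj]
    calc ‖a n * q ^ (n * j)‖ = ‖a n‖ * ‖q‖ ^ (n * j) := by rw [norm_mul, norm_pow]
    _ ≤ (n : ℝ) * ‖q‖ ^ (n * j) := mul_le_mul_of_nonneg_right (ha n) (by positivity)
    _ ≤ (n : ℝ) * (‖q‖ ^ n * ‖q‖ ^ (j - 1)) := by
        rcases eq_or_ne n 0 with rfl | hn
        · simp
        · rw [← pow_add]
          have h1 : 1 ≤ n := Nat.one_le_iff_ne_zero.mpr hn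
          have h2 : 1 ≤ j := Nat.one_le_iff_ne_zero.mpr hj
          have hle : n + (j - 1) ≤ n * j := by
            have h3 : j - 1 ≤ n * (j - 1) := Nat.le_mul_of_pos_left _ h1
            have h4 : n * j = n * 1 + n * (j - 1) := by
              rw [← Nat.mul_add]
              congr 1
              omega
            omega
          exact mul_le_mul_of_nonneg_left
            (pow_le_pow_of_le_one hr0 hq.le hle) (by positivity)
    _ = ((n : ℝ) * ‖q‖ ^ n) * ‖q‖ ^ (j - 1) := by ring


lemma fiber_tsum {q : ℂ} (a : ℕ → ℂ) (m : ℕ) :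
    ∑' x : (fun p : ℕ × ℕ => p.1 * p.2) ⁻¹' {m + 1},
        (if x.val.2 = 0 then (0:ℂ) else a x.val.1 * q ^ (x.val.1 * x.val.2))
      = (∑ d ∈ (m + 1).divisors, a d) * q ^ (m + 1) := by
  rw [show (fun p : ℕ × ℕ => p.1 * p.2) ⁻¹' {m + 1} = (m + 1).divisorsAntidiagonal by
      ext p; simp [Nat.mem_divisorsAntidiagonal],
    Finset.tsum_subtype' ((m + 1).divisorsAntidiagonal)
      (fun p : ℕ × ℕ => if p.2 = 0 then (0:ℂ) else a p.1 * q ^ (p.1 * p.2))]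
  have h : ∀ p ∈ (m + 1).divisorsAntidiagonal,
      (if p.2 = 0 then (0:ℂ) else a p.1 * q ^ (p.1 * p.2)) = a p.1 * q ^ (m + 1) := by
    rintro ⟨d, e⟩ hp
    rw [Nat.mem_divisorsAntidiagonal] at hp
    have he : e ≠ 0 := fun h => by simp [h] at hp
    simp only [if_neg he, hp.1]
  rw [Finset.sum_congr rfl h, ← Finset.sum_mul,
    Nat.sum_divisorsAntidiagonal (fun d e => a d)]

/-- Key: Lambert series to power series with divisor-sum coefficients. -/
lemma key {q : ℂ} (hq : ‖q‖ < 1) (a : ℕ → ℂ) (ha : ∀ n, ‖a n‖ ≤ n) :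
    ∑' n : ℕ, a (n + 1) * q ^ (n + 1) / (1 - q ^ (n + 1))
      = ∑' m : ℕ, (∑ d ∈ (m + 1).divisors, a d) * q ^ (m + 1) := by
  have ha0 : a 0 = 0 := norm_le_zero_iff.mp (by simpa using ha 0)
  set G : ℕ × ℕ → ℂ := fun p => if p.2 = 0 then 0 else a p.1 * q ^ (p.1 * p.2) with hGdef
  have hsum : Summable G := summable_G hq a ha
  set S : ℂ := ∑' p, G p with hS
  have hH : HasSum (fun n : ℕ => a n * q ^ n / (1 - q ^ n)) S :=
    hsum.hasSum.prod_fiberwise fun n => row_hasSum hq a ha0 n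
  have hK : HasSum (fun m : ℕ => ∑' x : (fun p : ℕ × ℕ => p.1 * p.2) ⁻¹' {m}, G x) S :=
    hsum.hasSum.tsum_fiberwise _
  set K : ℕ → ℂ := fun m => ∑' x : (fun p : ℕ × ℕ => p.1 * p.2) ⁻¹' {m}, G x with hKdef
  have hK0 : K 0 = 0 := by
    have h0 : ∀ x : (fun p : ℕ × ℕ => p.1 * p.2) ⁻¹' {0}, G x.val = 0 := by
      rintro ⟨⟨n, j⟩, hx⟩
      simp only [Set.mem_preimage, Set.mem_singleton_iff, Nat.mul_eq_zero] at hx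
      rcases hx with rfl | rfl
      · simp only [hGdef, ha0, zero_mul, ite_self]
      · simp [hGdef]
    simp only [hKdef, h0, tsum_zero]
  have hKm : ∀ m : ℕ, K (m + 1) = (∑ d ∈ (m + 1).divisors, a d) * q ^ (m + 1) :=
    fun m => fiber_tsum a m
  have h1 : ∑' n : ℕ, a (n + 1) * q ^ (n + 1) / (1 - q ^ (n + 1)) = S := by
    have h := Summable.tsum_eq_zero_add hH.summable
    rw [hH.tsum_eq] at h
    simp only [pow_zero, ha0, zero_mul, zero_div, zero_add] at h
    exact h.symm
  have h2 : ∑' m : ℕ, (∑ d ∈ (m + 1).divisors, a d) * q ^ (m + 1) = S := by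
    have h := Summable.tsum_eq_zero_add hK.summable
    rw [hK.tsum_eq, hK0, zero_add] at h
    rw [h]
    exact tsum_congr fun m => (hKm m).symm
  rw [h1, h2]

lemma summable_key {q : ℂ} (hq : ‖q‖ < 1) (a : ℕ → ℂ) (ha : ∀ n, ‖a n‖ ≤ n) :
    Summable (fun m : ℕ => (∑ d ∈ (m + 1).divisors, a d) * q ^ (m + 1)) := by
  have hsum := summable_G hq a ha
  have hK := hsum.hasSum.tsum_fiberwise (fun p : ℕ × ℕ => p.1 * p.2)
  exact ((summable_nat_add_iff 1).mpr hK.summable).congr fun m => fiber_tsum a m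


instance : Fact (Nat.Prime 5) := ⟨by norm_num⟩

/-- The Lambert series `S_r(q) = Σ_{k≥0} (5k+r) q^{5k+r}/(1 - q^{5k+r})`. -/
def lambertS (r : ℕ) (q : ℂ) : ℂ :=
  ∑' k : ℕ, ((5 * k + r : ℕ) : ℂ) * q ^ (5 * k + r) / (1 - q ^ (5 * k + r))

/-- `σ₁(m) = Σ_{d∣m} d`. -/
def sigma1 (m : ℕ) : ℕ := ∑ d ∈ m.divisors, d

/-- The quadratic character mod `5` (the Legendre symbol mod 5). -/
def chi5 (d : ℕ) : ℤ := legendreSym 5 (d : ℤ)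

/-- `E₊(q) = (1 − 24 Σ_{m≥1} σ₁(m) q^m) − 5 (1 − 24 Σ_{m≥1} σ₁(m) q^{5m})`. -/
def Eplus (q : ℂ) : ℂ :=
  (1 - 24 * ∑' m : ℕ, ((sigma1 (m + 1) : ℂ)) * q ^ (m + 1)) -
    5 * (1 - 24 * ∑' m : ℕ, ((sigma1 (m + 1) : ℂ)) * q ^ (5 * (m + 1)))

/-- `E_χ(q) = Σ_{m≥1} (Σ_{d∣m} χ(d) d) q^m`. -/
def Echi (q : ℂ) : ℂ :=
  ∑' m : ℕ, ((∑ d ∈ (m + 1).divisors, chi5 d * (d : ℤ) : ℤ) : ℂ) * q ^ (m + 1)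

/-- residue-class coefficient functions -/
def aRes (r : ℕ) : ℕ → ℂ := fun d => if d % 5 = r then (d : ℂ) else 0

lemma aRes_bound (r : ℕ) : ∀ n : ℕ, ‖aRes r n‖ ≤ n := by
  intro n
  rw [aRes]
  split
  · simp
  · simp

lemma id_bound : ∀ n : ℕ, ‖((n : ℕ) : ℂ)‖ ≤ n := fun n => by simp

lemma chi5_mod (d : ℕ) : chi5 d = legendreSym 5 ((d % 5 : ℕ) : ℤ) := by
  rw [chi5, legendreSym.mod]
  congr 1

lemma chi5_bound : ∀ n : ℕ, ‖((chi5 n : ℂ)) * n‖ ≤ n := by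
  intro n
  have h5 : n % 5 = 0 ∨ n % 5 = 1 ∨ n % 5 = 2 ∨ n % 5 = 3 ∨ n % 5 = 4 := by omega
  have hc : chi5 n = 0 ∨ chi5 n = 1 ∨ chi5 n = -1 := by
    rcases h5 with h | h | h | h | h <;> rw [chi5_mod, h] <;> decide
  rcases hc with h | h | h <;> simp [h]

/-- the Lambert series over an arithmetic progression as a power series -/
lemma lambert_eq {q : ℂ} (hq : ‖q‖ < 1) {r : ℕ} (hr1 : 1 ≤ r) (hr5 : r < 5) :
    lambertS r q = ∑' m : ℕ, (∑ d ∈ (m + 1).divisors, aRes r d) * q ^ (m + 1) := by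
  have hinj : Function.Injective (fun k : ℕ => 5 * k + (r - 1)) := fun a b h => by
    simp only at h
    omega
  have hsupp : Function.support
      (fun n : ℕ => aRes r (n + 1) * q ^ (n + 1) / (1 - q ^ (n + 1)))
      ⊆ Set.range (fun k : ℕ => 5 * k + (r - 1)) := by
    intro n hn
    have h5 : (n + 1) % 5 = r := by
      by_contra h
      simp [Function.mem_support, aRes, h] at hn
    refine ⟨(n + 1) / 5, ?_⟩
    show 5 * ((n + 1) / 5) + (r - 1) = n
    omega
  calc lambertS r q
      = ∑' k : ℕ, aRes r ((5 * k + (r - 1)) + 1) * q ^ ((5 * k + (r - 1)) + 1)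
          / (1 - q ^ ((5 * k + (r - 1)) + 1)) := by
        rw [lambertS]
        refine tsum_congr fun k => ?_
        have e : 5 * k + (r - 1) + 1 = 5 * k + r := by omega
        rw [e, aRes, if_pos (show (5 * k + r) % 5 = r by omega)]
    _ = ∑' n : ℕ, aRes r (n + 1) * q ^ (n + 1) / (1 - q ^ (n + 1)) :=
        hinj.tsum_eq hsupp
    _ = _ := key hq (aRes r) (aRes_bound r)

/-- the multiples-of-5 Lambert piece -/
lemma five_eq {q : ℂ} (hq : ‖q‖ < 1) :
    5 * (∑' m : ℕ, ((sigma1 (m + 1) : ℂ)) * q ^ (5 * (m + 1)))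
      = ∑' m : ℕ, (∑ d ∈ (m + 1).divisors, aRes 0 d) * q ^ (m + 1) := by
  have hq5 : ‖q ^ 5‖ < 1 := by
    rw [norm_pow]
    exact pow_lt_one₀ (norm_nonneg q) hq (by norm_num)
  have e1 : ∑' m : ℕ, ((sigma1 (m + 1) : ℂ)) * q ^ (5 * (m + 1))
      = ∑' n : ℕ, ((n + 1 : ℕ) : ℂ) * (q ^ 5) ^ (n + 1) / (1 - (q ^ 5) ^ (n + 1)) := by
    rw [key hq5 (fun d => (d : ℂ)) id_bound]
    refine tsum_congr fun m => ?_
    rw [← pow_mul, sigma1]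
    push_cast
    ring
  rw [e1, ← tsum_mul_left]
  have hinj : Function.Injective (fun k : ℕ => 5 * k + 4) := fun a b h => by
    simp only at h
    omega
  have hsupp : Function.support
      (fun n : ℕ => aRes 0 (n + 1) * q ^ (n + 1) / (1 - q ^ (n + 1)))
      ⊆ Set.range (fun k : ℕ => 5 * k + 4) := by
    intro n hn
    have h5 : (n + 1) % 5 = 0 := by
      by_contra h
      simp [Function.mem_support, aRes, h] at hn
    refine ⟨(n + 1) / 5 - 1, ?_⟩
    show 5 * ((n + 1) / 5 - 1) + 4 = n
    omega
  calc ∑' n : ℕ, 5 * (((n + 1 : ℕ) : ℂ) * (q ^ 5) ^ (n + 1) / (1 - (q ^ 5) ^ (n + 1)))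
      = ∑' k : ℕ, aRes 0 ((5 * k + 4) + 1) * q ^ ((5 * k + 4) + 1)
          / (1 - q ^ ((5 * k + 4) + 1)) := by
        refine tsum_congr fun k => ?_
        have e : 5 * k + 4 + 1 = 5 * (k + 1) := by omega
        rw [e, aRes, if_pos (show (5 * (k + 1)) % 5 = 0 by omega), ← pow_mul]
        push_cast
        ring
    _ = ∑' n : ℕ, aRes 0 (n + 1) * q ^ (n + 1) / (1 - q ^ (n + 1)) :=
        hinj.tsum_eq hsupp
    _ = _ := key hq (aRes 0) (aRes_bound 0)

/-- value of chi5 by residue -/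
lemma chi5_val (d : ℕ) :
    chi5 d = if d % 5 = 1 ∨ d % 5 = 4 then 1 else if d % 5 = 2 ∨ d % 5 = 3 then -1 else 0 := by
  rw [chi5_mod]
  have h5 : d % 5 = 0 ∨ d % 5 = 1 ∨ d % 5 = 2 ∨ d % 5 = 3 ∨ d % 5 = 4 := by omega
  rcases h5 with h | h | h | h | h <;> simp only [h] <;> decide

/-- per-divisor identities -/
lemma pointwise1 (d : ℕ) :
    2 * aRes 1 d + 2 * aRes 4 d + aRes 0 d = (d : ℂ) + ((chi5 d : ℂ)) * d := by
  rw [chi5_val]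
  have h5 : d % 5 = 0 ∨ d % 5 = 1 ∨ d % 5 = 2 ∨ d % 5 = 3 ∨ d % 5 = 4 := by omega
  rcases h5 with h | h | h | h | h <;> simp only [aRes, h] <;> norm_num <;> ring

lemma pointwise2 (d : ℕ) :
    2 * aRes 2 d + 2 * aRes 3 d + aRes 0 d = (d : ℂ) - ((chi5 d : ℂ)) * d := by
  rw [chi5_val]
  have h5 : d % 5 = 0 ∨ d % 5 = 1 ∨ d % 5 = 2 ∨ d % 5 = 3 ∨ d % 5 = 4 := by omega
  rcases h5 with h | h | h | h | h <;> simp only [aRes, h] <;> norm_num <;> ring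

lemma combo {x y z : ℕ → ℂ} (hx : Summable x) (hy : Summable y) (hz : Summable z) :
    ∑' m, (2 * x m + 2 * y m + z m) = 2 * (∑' m, x m) + 2 * (∑' m, y m) + ∑' m, z m := by
  rw [Summable.tsum_add ((hx.mul_left 2).add (hy.mul_left 2)) hz,
    Summable.tsum_add (hx.mul_left 2) (hy.mul_left 2), tsum_mul_left, tsum_mul_left]

/-- Eisenstein expression of the Rogers–Ramanujan Lambert series:
`S₁ + S₄ + 1/12 = −E₊/48 + E_χ/2` and `S₂ + S₃ + 1/12 = −E₊/48 − E_χ/2`. -/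
theorem lambert_eisenstein_expression (q : ℂ) (hq : ‖q‖ < 1) :
    lambertS 1 q + lambertS 4 q + 1 / 12 = -Eplus q / 48 + Echi q / 2 ∧
    lambertS 2 q + lambertS 3 q + 1 / 12 = -Eplus q / 48 - Echi q / 2 := by
  have S : ∀ r : ℕ, Summable (fun m : ℕ => (∑ d ∈ (m+1).divisors, aRes r d) * q ^ (m+1)) :=
    fun r => summable_key hq (aRes r) (aRes_bound r)
  have SI : Summable (fun m : ℕ => (∑ d ∈ (m+1).divisors, ((d:ℕ):ℂ)) * q ^ (m+1)) :=
    summable_key hq _ id_bound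
  have SC : Summable (fun m : ℕ => (∑ d ∈ (m+1).divisors, ((chi5 d : ℂ)) * d) * q ^ (m+1)) :=
    summable_key hq _ chi5_bound
  have hA : (∑' m : ℕ, ((sigma1 (m+1) : ℂ)) * q ^ (m+1))
      = ∑' m : ℕ, (∑ d ∈ (m+1).divisors, ((d:ℕ):ℂ)) * q ^ (m+1) := by
    refine tsum_congr fun m => ?_
    rw [sigma1]
    push_cast
    ring
  have hC : Echi q = ∑' m : ℕ, (∑ d ∈ (m+1).divisors, ((chi5 d : ℂ)) * d) * q ^ (m+1) := by
    rw [Echi]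
    refine tsum_congr fun m => ?_
    push_cast
    ring
  have h0 := five_eq hq
  have h1 := lambert_eq hq (r := 1) (by norm_num) (by norm_num)
  have h2 := lambert_eq hq (r := 2) (by norm_num) (by norm_num)
  have h3 := lambert_eq hq (r := 3) (by norm_num) (by norm_num)
  have h4 := lambert_eq hq (r := 4) (by norm_num) (by norm_num)
  have main1 : 2 * lambertS 1 q + 2 * lambertS 4 q
      + 5 * (∑' m : ℕ, ((sigma1 (m+1) : ℂ)) * q ^ (5*(m+1)))
      = (∑' m : ℕ, ((sigma1 (m+1) : ℂ)) * q ^ (m+1)) + Echi q := by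
    rw [h1, h4, h0, hA, hC, ← combo (S 1) (S 4) (S 0), ← Summable.tsum_add SI SC]
    refine tsum_congr fun m => ?_
    have hm : 2 * (∑ d ∈ (m+1).divisors, aRes 1 d) + 2 * (∑ d ∈ (m+1).divisors, aRes 4 d)
        + (∑ d ∈ (m+1).divisors, aRes 0 d)
        = (∑ d ∈ (m+1).divisors, ((d:ℕ):ℂ)) + ∑ d ∈ (m+1).divisors, ((chi5 d : ℂ)) * d := by
      simp only [Finset.mul_sum, ← Finset.sum_add_distrib]
      exact Finset.sum_congr rfl fun d _ => pointwise1 d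
    linear_combination (q ^ (m+1)) * hm
  have main2 : 2 * lambertS 2 q + 2 * lambertS 3 q
      + 5 * (∑' m : ℕ, ((sigma1 (m+1) : ℂ)) * q ^ (5*(m+1)))
      = (∑' m : ℕ, ((sigma1 (m+1) : ℂ)) * q ^ (m+1)) - Echi q := by
    rw [h2, h3, h0, hA, hC, ← combo (S 2) (S 3) (S 0), ← Summable.tsum_sub SI SC]
    refine tsum_congr fun m => ?_
    have hm : 2 * (∑ d ∈ (m+1).divisors, aRes 2 d) + 2 * (∑ d ∈ (m+1).divisors, aRes 3 d)
        + (∑ d ∈ (m+1).divisors, aRes 0 d)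
        = (∑ d ∈ (m+1).divisors, ((d:ℕ):ℂ)) - ∑ d ∈ (m+1).divisors, ((chi5 d : ℂ)) * d := by
      simp only [Finset.mul_sum, ← Finset.sum_add_distrib, ← Finset.sum_sub_distrib]
      exact Finset.sum_congr rfl fun d _ => pointwise2 d
    linear_combination (q ^ (m+1)) * hm
  constructor
  · unfold Eplus
    linear_combination main1 / 2
  · unfold Eplus
    linear_combination main2 / 2
end
end

section
/- The local fundamental matrix at the cusp 0 is invertible near 0: there exists ε with 0 < ε < 1 such that for every τ in the upper half-plane ℍ with |e^{−2πi/τ}| < ε, the determinant f₁(−1/τ)·f₂(−1/τ − 1) − f₂(−1/τ)·f₁(−1/τ − 1) is nonzero. -/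
noncomputable section

/-- The finite q-Pochhammer symbol `(a;q)_n = ∏_{j=0}^{n-1} (1 - a q^j)`. -/
def qPoch (a q : ℂ) (n : ℕ) : ℂ := ∏ j ∈ Finset.range n, (1 - a * q ^ j)

/-- The first Rogers–Ramanujan series `G(q) = Σ_{n≥0} q^{n²}/(q;q)_n`. -/
def RRG (q : ℂ) : ℂ := ∑' n : ℕ, q ^ (n ^ 2) / qPoch q q n

/-- The second Rogers–Ramanujan series `H(q) = Σ_{n≥0} q^{n(n+1)}/(q;q)_n`. -/
def RRH (q : ℂ) : ℂ := ∑' n : ℕ, q ^ (n * (n + 1)) / qPoch q q n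

/-- `f₁(τ) = q^{-1/60} G(q)` with `q = e^{2πiτ}`. -/
def f₁ (τ : ℂ) : ℂ :=
  Complex.exp (2 * (Real.pi : ℂ) * Complex.I * (-(1 : ℂ) / 60) * τ) *
    RRG (Complex.exp (2 * (Real.pi : ℂ) * Complex.I * τ))

/-- `f₂(τ) = q^{11/60} H(q)` with `q = e^{2πiτ}`. -/
def f₂ (τ : ℂ) : ℂ :=
  Complex.exp (2 * (Real.pi : ℂ) * Complex.I * ((11 : ℂ) / 60) * τ) *
    RRH (Complex.exp (2 * (Real.pi : ℂ) * Complex.I * τ))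

/-- Weierstrass-type product inequality. -/
lemma aux_prod_one_sub_ge (g : ℕ → ℝ) (hg : ∀ j, 0 ≤ g j ∧ g j ≤ 1) (n : ℕ) :
    1 - ∑ j ∈ Finset.range n, g j ≤ ∏ j ∈ Finset.range n, (1 - g j) := by
  induction n with
  | zero => simp
  | succ n ih =>
    rw [Finset.prod_range_succ, Finset.sum_range_succ]
    have hprod : (0 : ℝ) ≤ ∏ j ∈ Finset.range n, (1 - g j) :=
      Finset.prod_nonneg fun j _ => by linarith [(hg j).2]
    have hsum : (0 : ℝ) ≤ ∑ j ∈ Finset.range n, g j :=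
      Finset.sum_nonneg fun j _ => (hg j).1
    nlinarith [(hg n).1, (hg n).2]

lemma aux_geom_sum (n : ℕ) : ∑ j ∈ Finset.range n, (1/4:ℝ)^(j+1) ≤ 1/3 := by
  have h1 : ∑ j ∈ Finset.range n, (1/4:ℝ)^(j+1) ≤ ∑' j : ℕ, (1/4:ℝ)^(j+1) :=
    Summable.sum_le_tsum _ (fun j _ => by positivity)
      ((summable_geometric_of_lt_one (by norm_num) (by norm_num)).comp_injective
        (add_left_injective 1))
  have h2 : ∑' j : ℕ, (1/4:ℝ)^(j+1) = 1/3 := by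
    have : ∀ j : ℕ, (1/4:ℝ)^(j+1) = (1/4) * (1/4)^j := fun j => by ring
    simp_rw [this]
    rw [tsum_mul_left, tsum_geometric_of_lt_one (by norm_num) (by norm_num)]
    norm_num
  linarith

lemma aux_qPoch_norm (q : ℂ) (hq : ‖q‖ ≤ 1/4) (n : ℕ) :
    (2/3 : ℝ) ≤ ‖qPoch q q n‖ := by
  have hq0 : (0:ℝ) ≤ ‖q‖ := norm_nonneg q
  have hbnd : ∀ j : ℕ, 0 ≤ ‖q‖^(j+1) ∧ ‖q‖^(j+1) ≤ 1 := by
    intro j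
    refine ⟨by positivity, ?_⟩
    calc ‖q‖^(j+1) ≤ (1/4:ℝ)^(j+1) := pow_le_pow_left₀ hq0 hq _
      _ ≤ 1 := by apply pow_le_one₀ <;> norm_num
  have key : ∏ j ∈ Finset.range n, (1 - ‖q‖ ^ (j+1)) ≤ ‖qPoch q q n‖ := by
    rw [qPoch, norm_prod]
    apply Finset.prod_le_prod
    · intro j _; linarith [(hbnd j).2]
    · intro j _
      have h1 : ‖q‖ ^ (j+1) = ‖q * q ^ j‖ := by rw [norm_mul, norm_pow, pow_succ']
      calc 1 - ‖q‖ ^ (j+1) = ‖(1:ℂ)‖ - ‖q * q ^ j‖ := by rw [h1, norm_one]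
        _ ≤ ‖1 - q * q ^ j‖ := norm_sub_norm_le _ _
  have hsum : ∑ j ∈ Finset.range n, ‖q‖^(j+1) ≤ 1/3 := by
    calc ∑ j ∈ Finset.range n, ‖q‖^(j+1) ≤ ∑ j ∈ Finset.range n, (1/4:ℝ)^(j+1) :=
          Finset.sum_le_sum fun j _ => pow_le_pow_left₀ hq0 hq _
      _ ≤ 1/3 := aux_geom_sum n
  have := aux_prod_one_sub_ge (fun j => ‖q‖^(j+1)) hbnd n
  linarith

/-- General nonvanishing lemma for Rogers–Ramanujan-type series. -/
lemma aux_series_ne_zero (q : ℂ) (hq : ‖q‖ ≤ 1/4) (e : ℕ → ℕ) (he0 : e 0 = 0)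
    (hee : ∀ n, n ≤ e n) : (∑' n : ℕ, q ^ (e n) / qPoch q q n) ≠ 0 := by
  have hq0 : (0:ℝ) ≤ ‖q‖ := norm_nonneg q
  have hq1 : ‖q‖ < 1 := lt_of_le_of_lt hq (by norm_num)
  set a : ℕ → ℂ := fun n => q ^ (e n) / qPoch q q n with ha
  have hbound : ∀ n, ‖a n‖ ≤ (3/2) * ‖q‖ ^ n := by
    intro n
    have hp := aux_qPoch_norm q hq n
    have hqn : ‖q ^ (e n)‖ ≤ ‖q‖ ^ n := by
      rw [norm_pow]
      exact pow_le_pow_of_le_one hq0 hq1.le (hee n)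
    rw [ha]
    simp only [norm_div]
    rw [div_le_iff₀ (by linarith)]
    calc ‖q ^ (e n)‖ ≤ ‖q‖ ^ n := hqn
      _ = (3/2 * ‖q‖^n) * (2/3 : ℝ) := by ring
      _ ≤ (3/2 * ‖q‖^n) * ‖qPoch q q n‖ := by
          have h32 : (0:ℝ) ≤ 3/2 * ‖q‖^n := by positivity
          exact mul_le_mul_of_nonneg_left hp h32
  have hsumnorm : Summable (fun n => ‖a n‖) :=
    Summable.of_nonneg_of_le (fun n => norm_nonneg _) hbound
      ((summable_geometric_of_lt_one hq0 hq1).mul_left _)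
  have hsum : Summable a := hsumnorm.of_norm
  have ha0 : a 0 = 1 := by
    rw [ha]; simp [he0, qPoch]
  have htail : ‖∑' n : ℕ, a (n + 1)‖ ≤ 1/2 := by
    have h1 : ‖∑' n : ℕ, a (n + 1)‖ ≤ ∑' n : ℕ, ‖a (n + 1)‖ :=
      norm_tsum_le_tsum_norm (hsumnorm.comp_injective (add_left_injective 1))
    have h2 : ∑' n : ℕ, ‖a (n + 1)‖ ≤ ∑' n : ℕ, (3/2) * ‖q‖ * ‖q‖ ^ n := by
      apply Summable.tsum_le_tsum
      · intro n
        calc ‖a (n+1)‖ ≤ (3/2) * ‖q‖ ^ (n+1) := hbound (n+1)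
          _ = (3/2) * ‖q‖ * ‖q‖ ^ n := by ring
      · exact hsumnorm.comp_injective (add_left_injective 1)
      · exact (summable_geometric_of_lt_one hq0 hq1).mul_left _
    have h3 : ∑' n : ℕ, (3/2) * ‖q‖ * ‖q‖ ^ n = (3/2) * ‖q‖ * (1 - ‖q‖)⁻¹ := by
      rw [tsum_mul_left, tsum_geometric_of_lt_one hq0 hq1]
    have h4 : (3/2) * ‖q‖ * (1 - ‖q‖)⁻¹ ≤ 1/2 := by
      rw [mul_inv_le_iff₀ (by linarith)]
      nlinarith
    linarith
  have heq : (∑' n : ℕ, a n) = 1 + ∑' n : ℕ, a (n + 1) := by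
    rw [Summable.tsum_eq_zero_add hsum, ha0]
  intro hcontra
  rw [ha] at heq
  rw [hcontra] at heq
  have : ‖∑' n : ℕ, a (n+1)‖ ≥ 1 := by
    have : (∑' n : ℕ, a (n+1)) = -1 := by
      have := heq.symm
      linear_combination -heq
    rw [this]; simp
  linarith

/-- Invertibility of the local fundamental matrix at the cusp `0`: there is
`0 < ε < 1` such that whenever `τ ∈ ℍ` and `|e^{−2πi/τ}| < ε`, the determinant
`f₁(−1/τ) f₂(−1/τ − 1) − f₂(−1/τ) f₁(−1/τ − 1)` is nonzero. -/
theorem fundamental_matrix_invertible_near_zero :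
    ∃ ε : ℝ, 0 < ε ∧ ε < 1 ∧
      ∀ τ : ℂ, 0 < τ.im →
        ‖Complex.exp (-(2 * (Real.pi : ℂ) * Complex.I) / τ)‖ < ε →
        f₁ (-1 / τ) * f₂ (-1 / τ - 1) - f₂ (-1 / τ) * f₁ (-1 / τ - 1) ≠ 0 := by
  refine ⟨1/4, by norm_num, by norm_num, fun τ hτ hq => ?_⟩
  set c : ℂ := 2 * (Real.pi : ℂ) * Complex.I with hc
  set w : ℂ := -1 / τ with hw
  -- the nome at w and at w - 1 coincide
  have hexp_eq : Complex.exp (c * (w - 1)) = Complex.exp (c * w) := by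
    rw [mul_sub, mul_one, Complex.exp_sub, hc, Complex.exp_two_pi_mul_I, div_one]
  have hqnorm : ‖Complex.exp (c * w)‖ ≤ 1/4 := by
    have : c * w = -c / τ := by rw [hw]; ring
    rw [this]
    exact le_of_lt hq
  set Q : ℂ := Complex.exp (c * w) with hQ
  have hG : RRG Q ≠ 0 := aux_series_ne_zero Q hqnorm (fun n => n ^ 2) (by norm_num)
    (fun n => Nat.le_self_pow (by norm_num) n)
  have hH : RRH Q ≠ 0 := aux_series_ne_zero Q hqnorm (fun n => n * (n + 1)) (by norm_num)
    (fun n => Nat.le_mul_of_pos_right n (by omega))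
  -- rewrite the determinant
  have hdet : f₁ w * f₂ (w - 1) - f₂ w * f₁ (w - 1) =
      RRG Q * RRH Q *
        (Complex.exp (c * (-(1:ℂ)/60) * w + c * ((11:ℂ)/60) * (w - 1)) -
         Complex.exp (c * ((11:ℂ)/60) * w + c * (-(1:ℂ)/60) * (w - 1))) := by
    rw [f₁, f₂, f₁, f₂, hexp_eq, ← hc, ← hQ, Complex.exp_add, Complex.exp_add]
    ring
  rw [hdet]
  apply mul_ne_zero (mul_ne_zero hG hH)
  rw [sub_ne_zero]
  intro habs
  rw [Complex.exp_eq_exp_iff_exists_int] at habs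
  obtain ⟨n, hn⟩ := habs
  have hpi : (Real.pi : ℂ) ≠ 0 := by
    simp [Real.pi_ne_zero]
  have key : (n : ℂ) * 5 = -1 := by
    have h2 : c * (-(1:ℂ)/60) * w + c * ((11:ℂ)/60) * (w - 1) -
        (c * ((11:ℂ)/60) * w + c * (-(1:ℂ)/60) * (w - 1)) = -c/5 := by ring
    have h3 : -c/5 = (n : ℂ) * c := by linear_combination hn - h2 - (c * ((11:ℂ)/60) * w + c * (-(1:ℂ)/60) * (w - 1)) - h2 + h2
    have hcne : c ≠ 0 := by
      rw [hc]
      simp [Real.pi_ne_zero, Complex.I_ne_zero]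
    field_simp at h3
    exact mul_right_cancel₀ hcne (show ((n:ℂ) * 5) * c = (-1) * c by linear_combination (-c) * h3)
  have h5 : ((5 * n : ℤ) : ℂ) = ((-1 : ℤ) : ℂ) := by push_cast; linear_combination key
  have h6 : (5 * n : ℤ) = -1 := Int.cast_injective h5
  omega
end
end
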